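/- arXiv:2410.23702 — 9 statements merged into one kernel-verified Lean document; each statement's English description precedes it below -/
import Mathlib

section
/- Let G be a 3-connected locally nonforesty graph of order n ≥ 8 containing a vertex u whose neighbors in the set S of degree-3 vertices number i and with deg(u) = i + 2. Then G is isomorphic to the join K_3 ∨ complement(K_i), and hence e(G) = 3n - 6. -/
open SimpleGraph

def LocallyNonforesty {V : Type*} (G : SimpleGraph V) : Prop :=
  ∀ v : V, ¬ (G.induce (G.neighborSet v)).IsAcyclic

def ThreeConnected {V : Type*} [Fintype V] (G : SimpleGraph V) : Prop :=
  4 ≤ Fintype.card V ∧ ∀ S : Finset V, S.card ≤ 2 → (G.induce ((↑S : Set V)ᶜ)).Connected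

def K3JoinEmpty (i : ℕ) : SimpleGraph (Fin 3 ⊕ Fin i) :=
  SimpleGraph.fromRel (fun a _ => a.isLeft)


lemma walk_closed {W : Type*} {H : SimpleGraph W} (A : Set W)
    (hA : ∀ x ∈ A, ∀ y, H.Adj x y → y ∈ A) :
    ∀ {v w : W}, H.Walk v w → v ∈ A → w ∈ A := by
  intro v w p
  induction p with
  | nil => exact id
  | cons h p ih => exact fun hv => ih (hA _ hv _ h)

lemma reach_closed {V : Type*} {G : SimpleGraph V} {s : Set V}
    (hconn : (G.induce s).Connected) (B : Set V)
    (hB : ∀ x ∈ B, ∀ y ∈ s, G.Adj x y → y ∈ B) {v w : V}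
    (hv : v ∈ s) (hw : w ∈ s) (hvB : v ∈ B) : w ∈ B := by
  obtain ⟨p⟩ := hconn.preconnected ⟨v, hv⟩ ⟨w, hw⟩
  exact walk_closed (Subtype.val ⁻¹' B)
    (fun x hx y hadj => hB x hx y y.2 hadj) p hvB

lemma triangle_of_deg3 {V : Type*} [Fintype V] (G : SimpleGraph V) [DecidableRel G.Adj]
    (hl : ∀ v : V, ¬ (G.induce (G.neighborSet v)).IsAcyclic)
    {v : V} (hd : G.degree v = 3) :
    ∀ x ∈ G.neighborFinset v, ∀ y ∈ G.neighborFinset v, x ≠ y → G.Adj x y := by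
  classical
  have hcard : Fintype.card (G.neighborSet v) = 3 := by
    rw [G.card_neighborSet_eq_degree, hd]
  have h := hl v
  rw [IsAcyclic] at h
  push_neg at h
  obtain ⟨x, c, hc⟩ := h
  have h3 : 3 ≤ c.length := hc.three_le_length
  have hnd : c.support.tail.Nodup := hc.2
  have hlen3 : c.support.tail.length ≤ 3 := by
    have := hnd.length_le_card
    omega
  have hsl : c.support.length = c.length + 1 := c.length_support
  have hlt : c.support.tail.length = c.length := by
    have : c.support.tail.length + 1 = c.support.length := by
      cases hs : c.support with
      | nil => exact absurd hs c.support_ne_nil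
      | cons a l => simp [hs]
    omega
  have hclen : c.length = 3 := by omega
  -- destructure the walk
  cases c with
  | nil => simp at hclen
  | cons h1 p1 =>
    rename_i a
    cases p1 with
    | nil => simp at hclen
    | cons h2 p2 =>
      rename_i b
      cases p2 with
      | nil => simp at hclen
      | cons h3' p3 =>
        rename_i d
        cases p3 with
        | nil =>
          -- walk x → a → b → d = x (nil : Walk d x means d = x)
          clear hclen hlt hsl hlen3 h3 hc
          simp only [Walk.support_cons, Walk.support_nil, List.tail_cons] at hnd
          -- hnd : [a, b, d].Nodup  (with d = x forced by nil? no: nil : Walk d x so d = x)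
          have hxa : G.Adj ↑x ↑a := h1
          have hab : G.Adj ↑a ↑b := h2
          have hbx : G.Adj ↑b ↑x := h3'
          simp only [List.nodup_cons, List.mem_cons, List.not_mem_nil, or_false,
            List.nodup_nil, and_true, not_or] at hnd
          have hab' : (a:V) ≠ b := fun h => hnd.1.1 (Subtype.ext h)
          have hax' : (a:V) ≠ x := fun h => hnd.1.2 (Subtype.ext h)
          have hbx' : (b:V) ≠ x := fun h => hnd.2.1 (Subtype.ext h)
          have hsub : ({(x:V), (a:V), (b:V)} : Finset V) ⊆ G.neighborFinset v := by
            intro p hp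
            simp only [Finset.mem_insert, Finset.mem_singleton] at hp
            rcases hp with rfl | rfl | rfl
            · exact (mem_neighborFinset _ _ _).2 x.2
            · exact (mem_neighborFinset _ _ _).2 a.2
            · exact (mem_neighborFinset _ _ _).2 b.2
          have hcard2 : ({(x:V), (a:V), (b:V)} : Finset V).card = 3 := by
            rw [Finset.card_insert_of_notMem (by simp [hax'.symm, hbx'.symm]),
              Finset.card_insert_of_notMem (by simp [hab']), Finset.card_singleton]
          have heq : G.neighborFinset v = ({(x:V), (a:V), (b:V)} : Finset V) := by
            refine (Finset.eq_of_subset_of_card_le hsub ?_).symm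
            rw [hcard2, G.card_neighborFinset_eq_degree, hd]
          intro p hp q hq hne
          rw [heq] at hp hq
          simp only [Finset.mem_insert, Finset.mem_singleton] at hp hq
          rcases hp with rfl | rfl | rfl <;> rcases hq with rfl | rfl | rfl <;>
            first
            | exact absurd rfl hne
            | exact hxa | exact hab | exact hbx
            | exact hxa.symm | exact hab.symm | exact hbx.symm
        | cons h4 p4 =>
          simp at hclen

lemma exists_not_mem_of_card_lt {V : Type*} [Fintype V] (s : Finset V)
    (h : s.card < Fintype.card V) : ∃ w, w ∉ s := by
  by_contra h'
  push_neg at h'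
  have h1 : (Finset.univ : Finset V) ⊆ s := fun x _ => h' x
  have := Finset.card_le_card h1
  simp only [Finset.card_univ] at this
  omega


theorem stmt3 {V : Type*} [Fintype V] (G : SimpleGraph V) [DecidableRel G.Adj]
    (n : ℕ) (hn : 8 ≤ n) (hcard : Fintype.card V = n)
    (h3 : ThreeConnected G) (hl : LocallyNonforesty G) (u : V) (i : ℕ)
    (hi : ((G.neighborFinset u).filter (fun v => G.degree v = 3)).card = i)
    (hu : G.degree u = i + 2) :
    Nonempty (G ≃g K3JoinEmpty i) ∧ G.edgeFinset.card = 3 * n - 6 := by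
  classical
  set S' := (G.neighborFinset u).filter (fun v => G.degree v = 3) with hS'def
  have hS'sub : S' ⊆ G.neighborFinset u := Finset.filter_subset _ _
  have hS'deg : ∀ v ∈ S', G.degree v = 3 := fun v hv => (Finset.mem_filter.1 hv).2
  have htri := fun {v} hv => triangle_of_deg3 G hl (v := v) hv
  -- step 1 : 1 ≤ i
  have hi1 : 1 ≤ i := by
    by_contra h
    have hi0 : i = 0 := by omega
    have hdeg2 : (G.neighborFinset u).card = 2 := by
      rw [G.card_neighborFinset_eq_degree, hu, hi0]
    have hconn := h3.2 (G.neighborFinset u) (by omega)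
    obtain ⟨w, hw⟩ : ∃ w, w ∉ insert u (G.neighborFinset u) := by
      by_contra hall
      push_neg at hall
      have h1 : (Finset.univ : Finset V) ⊆ insert u (G.neighborFinset u) :=
        fun x _ => hall x
      have := Finset.card_le_card h1
      simp only [Finset.card_univ, hcard] at this
      have := Finset.card_insert_le u (G.neighborFinset u)
      omega
    simp only [Finset.mem_insert, not_or] at hw
    have hwB : w ∈ ({u} : Set V) := by
      refine reach_closed hconn ({u} : Set V) ?_ ?_ ?_ rfl
      · intro x hx y hy hadj
        exfalso
        rcases hx with rfl
        exact hy (Finset.mem_coe.2 ((G.mem_neighborFinset x y).2 hadj))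
      · exact fun h => G.irrefl ((G.mem_neighborFinset u u).1 h)
      · exact hw.2
    exact hw.1 hwB
  -- step 2 : no two vertices of S' are adjacent
  have hC : ∀ v ∈ S', ∀ w ∈ S', ¬ G.Adj v w := by
    rintro v hv w hw hadj
    have hdv := hS'deg v hv
    have hdw := hS'deg w hw
    have hvu : G.Adj u v := (G.mem_neighborFinset u v).1 (hS'sub hv)
    have hwu : G.Adj u w := (G.mem_neighborFinset u w).1 (hS'sub hw)
    have hNvcard : (G.neighborFinset v).card = 3 := by
      rw [G.card_neighborFinset_eq_degree, hdv]
    have hNwcard : (G.neighborFinset w).card = 3 := by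
      rw [G.card_neighborFinset_eq_degree, hdw]
    have huv : u ∈ G.neighborFinset v := (G.mem_neighborFinset v u).2 hvu.symm
    have hwv : w ∈ G.neighborFinset v := (G.mem_neighborFinset v w).2 hadj
    have hvw : v ≠ w := G.ne_of_adj hadj
    have huv' : u ≠ v := G.ne_of_adj hvu
    have huw' : u ≠ w := G.ne_of_adj hwu
    obtain ⟨y, hy⟩ : ∃ y, G.neighborFinset v \ {u, w} = {y} := by
      apply Finset.card_eq_one.1
      rw [Finset.card_sdiff_of_subset (by
        intro x hx
        simp only [Finset.mem_insert, Finset.mem_singleton] at hx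
        rcases hx with rfl | rfl
        exacts [huv, hwv])]
      rw [hNvcard, Finset.card_insert_of_notMem (by simp [huw']), Finset.card_singleton]
    have hymem : y ∈ G.neighborFinset v \ {u, w} := by rw [hy]; exact Finset.mem_singleton_self y
    rw [Finset.mem_sdiff, Finset.mem_insert, Finset.mem_singleton] at hymem
    obtain ⟨hyNv, hyuw⟩ := hymem
    push_neg at hyuw
    obtain ⟨hyu, hyw⟩ := hyuw
    have hyv : y ≠ v := fun h => G.irrefl (h ▸ (G.mem_neighborFinset v y).1 hyNv)
    have hNv : G.neighborFinset v = {u, w, y} := by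
      refine (Finset.eq_of_subset_of_card_le ?_ ?_).symm
      · intro x hx
        simp only [Finset.mem_insert, Finset.mem_singleton] at hx
        rcases hx with rfl | rfl | rfl
        exacts [huv, hwv, hyNv]
      · rw [hNvcard, Finset.card_insert_of_notMem (by simp [huw', hyu.symm]),
          Finset.card_insert_of_notMem (by simp [hyw.symm]), Finset.card_singleton]
    have hawy : G.Adj w y := htri hdv w hwv y hyNv hyw.symm
    have hNw : G.neighborFinset w = {u, v, y} := by
      refine (Finset.eq_of_subset_of_card_le ?_ ?_).symm
      · intro x hx
        simp only [Finset.mem_insert, Finset.mem_singleton] at hx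
        rcases hx with rfl | rfl | rfl
        · exact (G.mem_neighborFinset w x).2 hwu.symm
        · exact (G.mem_neighborFinset w x).2 hadj.symm
        · exact (G.mem_neighborFinset w x).2 hawy
      · rw [hNwcard, Finset.card_insert_of_notMem (by simp [huv', hyu.symm]),
          Finset.card_insert_of_notMem (by simp [hyv.symm]), Finset.card_singleton]
    -- removing {u, y} disconnects {v, w} from the rest
    have hconn := h3.2 {u, y} (Finset.card_insert_le u {y} |>.trans (by simp))
    obtain ⟨z, hz⟩ : ∃ z, z ∉ ({u, y, v, w} : Finset V) := by
      apply exists_not_mem_of_card_lt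
      have h4 : ({u, y, v, w} : Finset V).card ≤ 4 := by
        apply le_trans (Finset.card_insert_le _ _)
        have := Finset.card_insert_le y ({v, w} : Finset V)
        have := Finset.card_insert_le v ({w} : Finset V)
        simp only [Finset.card_singleton] at *
        omega
      omega
    simp only [Finset.mem_insert, Finset.mem_singleton, not_or] at hz
    obtain ⟨hzu, hzy, hzv, hzw⟩ := hz
    have hzB : z ∈ ({v, w} : Set V) := by
      refine reach_closed hconn ({v, w} : Set V) ?_ ?_ ?_ (Or.inl rfl)
      · rintro x hx p hp hadjxp
        have hp' : p ≠ u ∧ p ≠ y := by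
          constructor <;> (rintro rfl; apply hp; simp)
        rcases hx with rfl | rfl
        · have := (G.mem_neighborFinset x p).2 hadjxp
          rw [hNv, Finset.mem_insert, Finset.mem_insert, Finset.mem_singleton] at this
          rcases this with rfl | rfl | rfl
          · exact absurd rfl hp'.1
          · exact Or.inr rfl
          · exact absurd rfl hp'.2
        · have := (G.mem_neighborFinset x p).2 hadjxp
          rw [hNw, Finset.mem_insert, Finset.mem_insert, Finset.mem_singleton] at this
          rcases this with rfl | rfl | rfl
          · exact absurd rfl hp'.1
          · exact Or.inl rfl
          · exact absurd rfl hp'.2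
      · intro h
        simp only [Finset.coe_insert, Finset.coe_singleton, Set.mem_insert_iff,
          Set.mem_singleton_iff] at h
        rcases h with rfl | rfl
        · exact G.irrefl hvu
        · exact G.irrefl ((G.mem_neighborFinset v v).1 hyNv)
      · intro h
        simp only [Finset.coe_insert, Finset.coe_singleton, Set.mem_insert_iff,
          Set.mem_singleton_iff] at h
        rcases h with rfl | rfl
        · exact hzu rfl
        · exact hzy rfl
    rcases hzB with rfl | hzB
    · exact hzv rfl
    · exact hzw (hzB : z = w)
  -- step 3 : the two special vertices a b
  have hNucard : (G.neighborFinset u).card = i + 2 := by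
    rw [G.card_neighborFinset_eq_degree, hu]
  have hTcard : (G.neighborFinset u \ S').card = 2 := by
    rw [Finset.card_sdiff_of_subset hS'sub, hNucard, hi]
    omega
  obtain ⟨a, b, hab, hTeq⟩ := Finset.card_eq_two.1 hTcard
  have haT : a ∈ G.neighborFinset u \ S' := by rw [hTeq]; simp
  have hbT : b ∈ G.neighborFinset u \ S' := by rw [hTeq]; simp
  have haN : a ∈ G.neighborFinset u := (Finset.mem_sdiff.1 haT).1
  have hbN : b ∈ G.neighborFinset u := (Finset.mem_sdiff.1 hbT).1
  have haS' : a ∉ S' := (Finset.mem_sdiff.1 haT).2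
  have hbS' : b ∉ S' := (Finset.mem_sdiff.1 hbT).2
  have hua : G.Adj u a := (G.mem_neighborFinset u a).1 haN
  have hub : G.Adj u b := (G.mem_neighborFinset u b).1 hbN
  have huS' : u ∉ S' := fun h => G.irrefl ((G.mem_neighborFinset u u).1 (hS'sub h))
  have huane : u ≠ a := G.ne_of_adj hua
  have hubne : u ≠ b := G.ne_of_adj hub
  -- step 4 : each v ∈ S' has neighbors exactly {u, a, b}
  have hNv : ∀ v ∈ S', G.neighborFinset v = {u, a, b} := by
    intro v hv
    have hdv := hS'deg v hv
    have huvadj : G.Adj u v := (G.mem_neighborFinset u v).1 (hS'sub hv)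
    have huv : u ∈ G.neighborFinset v := (G.mem_neighborFinset v u).2 huvadj.symm
    have hNvcard : (G.neighborFinset v).card = 3 := by
      rw [G.card_neighborFinset_eq_degree, hdv]
    have hsub : G.neighborFinset v \ {u} ⊆ G.neighborFinset u \ S' := by
      intro x hx
      rw [Finset.mem_sdiff, Finset.mem_singleton] at hx
      have hxu : G.Adj x u := htri hdv x hx.1 u huv hx.2
      rw [Finset.mem_sdiff]
      refine ⟨(G.mem_neighborFinset u x).2 hxu.symm, fun hxS' => ?_⟩
      exact hC v hv x hxS' ((G.mem_neighborFinset v x).1 hx.1)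
    have hc2 : (G.neighborFinset v \ {u}).card = 2 := by
      rw [Finset.card_sdiff_of_subset (Finset.singleton_subset_iff.2 huv), hNvcard, Finset.card_singleton]
    have heq : G.neighborFinset v \ {u} = G.neighborFinset u \ S' :=
      Finset.eq_of_subset_of_card_le hsub (by rw [hTcard, hc2])
    have : G.neighborFinset v \ {u} = {a, b} := by rw [heq, hTeq]
    rw [Finset.sdiff_singleton_eq_erase] at this
    rw [← Finset.insert_erase huv, this]
  -- a and b are adjacent
  obtain ⟨v0, hv0⟩ : S'.Nonempty := Finset.card_pos.1 (by omega)
  have hav0 : a ∈ G.neighborFinset v0 := by rw [hNv v0 hv0]; simp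
  have hbv0 : b ∈ G.neighborFinset v0 := by rw [hNv v0 hv0]; simp
  have habadj : G.Adj a b := htri (hS'deg v0 hv0) a hav0 b hbv0 hab
  -- N(u) = {a, b} ∪ S'
  have hNu : G.neighborFinset u = insert a (insert b S') := by
    have h1 : (G.neighborFinset u \ S') ∪ S' = G.neighborFinset u :=
      Finset.sdiff_union_of_subset hS'sub
    rw [← h1, hTeq]
    ext x
    simp [Finset.mem_union, Finset.mem_insert, or_assoc]
  -- step 5 : there are no other vertices
  have hD : ∀ z : V, z = u ∨ z = a ∨ z = b ∨ z ∈ S' := by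
    intro z
    by_cases hza : z = a
    · exact Or.inr (Or.inl hza)
    by_cases hzb : z = b
    · exact Or.inr (Or.inr (Or.inl hzb))
    have hconn := h3.2 {a, b} (Finset.card_insert_le a {b} |>.trans (by simp))
    have hzB : z ∈ ({u} ∪ (↑S' : Set V)) := by
      refine reach_closed hconn ({u} ∪ (↑S' : Set V)) ?_ ?_ ?_ (Or.inl rfl)
      · rintro x hx p hp hadjxp
        have hp' : p ≠ a ∧ p ≠ b := by
          constructor <;> (rintro rfl; apply hp; simp)
        rcases hx with hx | hx
        · rcases hx with rfl
          have := (G.mem_neighborFinset x p).2 hadjxp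
          rw [hNu, Finset.mem_insert, Finset.mem_insert] at this
          rcases this with rfl | rfl | hpS'
          · exact absurd rfl hp'.1
          · exact absurd rfl hp'.2
          · exact Or.inr hpS'
        · have := (G.mem_neighborFinset x p).2 hadjxp
          rw [hNv x hx, Finset.mem_insert, Finset.mem_insert, Finset.mem_singleton] at this
          rcases this with rfl | rfl | rfl
          · exact Or.inl rfl
          · exact absurd rfl hp'.1
          · exact absurd rfl hp'.2
      · intro h
        simp only [Finset.coe_insert, Finset.coe_singleton, Set.mem_insert_iff,
          Set.mem_singleton_iff] at h
        rcases h with h | h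
        exacts [huane h, hubne h]
      · intro h
        simp only [Finset.coe_insert, Finset.coe_singleton, Set.mem_insert_iff,
          Set.mem_singleton_iff] at h
        rcases h with h | h
        exacts [hza h, hzb h]
    rcases hzB with rfl | hzB
    · exact Or.inl rfl
    · exact Or.inr (Or.inr (Or.inr hzB))
  -- step 6 : adjacency characterization
  have hadj_uv : ∀ v ∈ S', G.Adj u v := fun v hv => (G.mem_neighborFinset u v).1 (hS'sub hv)
  have hadj_av : ∀ v ∈ S', G.Adj a v := by
    intro v hv
    have : a ∈ G.neighborFinset v := by rw [hNv v hv]; simp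
    exact ((G.mem_neighborFinset v a).1 this).symm
  have hadj_bv : ∀ v ∈ S', G.Adj b v := by
    intro v hv
    have : b ∈ G.neighborFinset v := by rw [hNv v hv]; simp
    exact ((G.mem_neighborFinset v b).1 this).symm
  have hPadj : ∀ x y : V, x ≠ y → (x = u ∨ x = a ∨ x = b) → G.Adj x y := by
    intro x y hne hx
    rcases hD y with hy | hy | hy | hy
    · rcases hx with h | h | h <;> rw [h, hy]
      · exact absurd (h.trans hy.symm) hne
      · exact hua.symm
      · exact hub.symm
    · rcases hx with h | h | h <;> rw [h, hy]
      · exact hua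
      · exact absurd (h.trans hy.symm) hne
      · exact habadj.symm
    · rcases hx with h | h | h <;> rw [h, hy]
      · exact hub
      · exact habadj
      · exact absurd (h.trans hy.symm) hne
    · rcases hx with h | h | h <;> rw [h]
      · exact hadj_uv y hy
      · exact hadj_av y hy
      · exact hadj_bv y hy
  have hAdjChar : ∀ x y : V, G.Adj x y ↔
      x ≠ y ∧ ((x = u ∨ x = a ∨ x = b) ∨ (y = u ∨ y = a ∨ y = b)) := by
    intro x y
    constructor
    · intro hadj
      refine ⟨G.ne_of_adj hadj, ?_⟩
      by_contra hcon
      push_neg at hcon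
      obtain ⟨hx, hy⟩ := hcon
      have hxS' : x ∈ S' := by
        rcases hD x with h | h | h | h
        · exact absurd h hx.1
        · exact absurd h hx.2.1
        · exact absurd h hx.2.2
        · exact h
      have hyS' : y ∈ S' := by
        rcases hD y with h | h | h | h
        · exact absurd h hy.1
        · exact absurd h hy.2.1
        · exact absurd h hy.2.2
        · exact h
      exact hC x hxS' y hyS' hadj
    · rintro ⟨hne, hP | hP⟩
      · exact hPadj x y hne hP
      · exact (hPadj y x hne.symm hP).symm
  -- step 7 : cardinality
  have huniveq : (Finset.univ : Finset V) = insert u (insert a (insert b S')) := by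
    ext z
    simp only [Finset.mem_univ, true_iff, Finset.mem_insert]
    exact hD z
  have hni3 : n = i + 3 := by
    rw [← hcard, ← Finset.card_univ, huniveq,
      Finset.card_insert_of_notMem (by simp [huane, hubne, huS']),
      Finset.card_insert_of_notMem (by simp [hab, haS']),
      Finset.card_insert_of_notMem hbS', hi]
  -- step 8 : degrees of a and b, edge count
  have hdega : G.degree a = i + 2 := by
    have hNa : G.neighborFinset a = Finset.univ.erase a := by
      ext x
      rw [Finset.mem_erase, G.mem_neighborFinset, hAdjChar]
      constructor
      · rintro ⟨hne, _⟩
        exact ⟨hne.symm, Finset.mem_univ x⟩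
      · rintro ⟨hne, _⟩
        exact ⟨hne.symm, Or.inl (Or.inr (Or.inl rfl))⟩
    rw [← G.card_neighborFinset_eq_degree, hNa, Finset.card_erase_of_mem (Finset.mem_univ a),
      Finset.card_univ, hcard]
    omega
  have hdegb : G.degree b = i + 2 := by
    have hNb : G.neighborFinset b = Finset.univ.erase b := by
      ext x
      rw [Finset.mem_erase, G.mem_neighborFinset, hAdjChar]
      constructor
      · rintro ⟨hne, _⟩
        exact ⟨hne.symm, Finset.mem_univ x⟩
      · rintro ⟨hne, _⟩
        exact ⟨hne.symm, Or.inl (Or.inr (Or.inr rfl))⟩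
    rw [← G.card_neighborFinset_eq_degree, hNb, Finset.card_erase_of_mem (Finset.mem_univ b),
      Finset.card_univ, hcard]
    omega
  have hsumS : ∑ v ∈ S', G.degree v = 3 * i := by
    rw [Finset.sum_congr rfl (fun v hv => hS'deg v hv), Finset.sum_const, hi, smul_eq_mul]
    ring
  have hsum : ∑ v : V, G.degree v = 6 * i + 6 := by
    rw [huniveq, Finset.sum_insert (by simp [huane, hubne, huS']),
      Finset.sum_insert (by simp [hab, haS']), Finset.sum_insert hbS', hu, hdega, hdegb, hsumS]
    ring
  have hhs := G.sum_degrees_eq_twice_card_edges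
  have hedge : G.edgeFinset.card = 3 * n - 6 := by omega
  -- step 9 : the isomorphism
  let eI : {x // x ∈ S'} ≃ Fin i := S'.equivFin.trans (finCongr hi)
  let g : Fin 3 ⊕ Fin i → V := Sum.elim ![u, a, b] (fun k => (eI.symm k : V))
  have hgl0 : g (Sum.inl 0) = u := rfl
  have hgl1 : g (Sum.inl 1) = a := rfl
  have hgl2 : g (Sum.inl 2) = b := rfl
  have hgleft : ∀ j : Fin 3, g (Sum.inl j) = u ∨ g (Sum.inl j) = a ∨ g (Sum.inl j) = b := by
    intro j
    fin_cases j
    · exact Or.inl rfl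
    · exact Or.inr (Or.inl rfl)
    · exact Or.inr (Or.inr rfl)
  have hgrightS : ∀ k : Fin i, g (Sum.inr k) ∈ S' := fun k => (eI.symm k).2
  have hginj : Function.Injective g := by
    rintro (j | k) (j' | k') h
    · fin_cases j <;> fin_cases j' <;>
        first
        | rfl
        | (exfalso
           simp only [g, Sum.elim_inl] at h
           first
           | exact huane (by simpa using h)
           | exact huane (by simpa using h.symm)
           | exact hubne (by simpa using h)
           | exact hubne (by simpa using h.symm)
           | exact hab (by simpa using h)
           | exact hab (by simpa using h.symm))
    · exfalso
      have hk := hgrightS k'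
      rw [← h] at hk
      rcases hgleft j with he | he | he <;> rw [he] at hk
      exacts [huS' hk, haS' hk, hbS' hk]
    · exfalso
      have hk := hgrightS k
      rw [h] at hk
      rcases hgleft j' with he | he | he <;> rw [he] at hk
      exacts [huS' hk, haS' hk, hbS' hk]
    · have : eI.symm k = eI.symm k' := Subtype.ext h
      rw [eI.symm.injective this]
  have hgsurj : Function.Surjective g := by
    intro x
    rcases hD x with rfl | rfl | rfl | hx
    · exact ⟨Sum.inl 0, rfl⟩
    · exact ⟨Sum.inl 1, rfl⟩
    · exact ⟨Sum.inl 2, rfl⟩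
    · exact ⟨Sum.inr (eI ⟨x, hx⟩), by simp [g]⟩
  have hPiff : ∀ p : Fin 3 ⊕ Fin i,
      (g p = u ∨ g p = a ∨ g p = b) ↔ (Sum.isLeft p = true) := by
    rintro (j | k)
    · simp only [Sum.isLeft_inl, iff_true]
      exact hgleft j
    · simp only [Sum.isLeft_inr, Bool.false_eq_true, iff_false]
      rintro (he | he | he) <;> (have hk := hgrightS k; rw [he] at hk)
      exacts [huS' hk, haS' hk, hbS' hk]
  have hiso : Nonempty (G ≃g K3JoinEmpty i) := by
    refine ⟨(RelIso.mk (Equiv.ofBijective g ⟨hginj, hgsurj⟩) ?_).symm⟩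
    intro p q
    show G.Adj (g p) (g q) ↔ (SimpleGraph.fromRel _).Adj p q
    rw [hAdjChar (g p) (g q), SimpleGraph.fromRel_adj]
    exact and_congr hginj.ne_iff (or_congr (hPiff p) (hPiff q))
  exact ⟨hiso, hedge⟩
end

section
/- Let G be a 3-connected locally nonforesty graph with minimum degree 3, S its set of degree-3 vertices with |S| = s, such that every vertex u with i neighbors in S satisfies deg(u) ≥ i + 3. Then e(G) ≥ 2n - s/2, where n is the order of G. -/
open SimpleGraph

theorem stmt4 {V : Type*} [Fintype V] [Nonempty V] (G : SimpleGraph V)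
    [DecidableRel G.Adj] (h3 : ThreeConnected G) (hl : LocallyNonforesty G)
    (hmin : G.minDegree = 3) (n s : ℕ) (hn : Fintype.card V = n)
    (hs : (Finset.univ.filter (fun v => G.degree v = 3)).card = s)
    (hstep : ∀ u : V,
      ((G.neighborFinset u).filter (fun v => G.degree v = 3)).card + 3 ≤ G.degree u) :
    (2 * n : ℚ) - s / 2 ≤ G.edgeFinset.card := by
  have hkey : 4 * n ≤ 2 * G.edgeFinset.card + s := by
    rw [← hs, ← hn, ← G.sum_degrees_eq_twice_card_edges, Finset.card_filter]
    rw [← Finset.sum_add_distrib]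
    calc 4 * Fintype.card V = ∑ _v : V, 4 := by
          simp [Finset.sum_const, mul_comm]
      _ ≤ ∑ v : V, (G.degree v + if G.degree v = 3 then 1 else 0) := by
          apply Finset.sum_le_sum
          intro v _
          have h := hstep v
          by_cases h3 : G.degree v = 3 <;> simp [h3] <;> omega
  have : (4 * n : ℚ) ≤ 2 * G.edgeFinset.card + s := by exact_mod_cast hkey
  linarith
end

section
/- Let G be a 3-connected locally nonforesty graph with minimum degree 3, S its set of degree-3 vertices with |S| = s, such that every vertex u with i ≥ 1 neighbors in S satisfies deg(u) ≥ i + 3. Then e(G) ≥ 3(n + s)/2, where n is the order of G. -/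
open SimpleGraph

theorem stmt5 {V : Type*} [Fintype V] [Nonempty V] (G : SimpleGraph V)
    [DecidableRel G.Adj] (h3 : ThreeConnected G) (hl : LocallyNonforesty G)
    (hmin : G.minDegree = 3) (n s : ℕ) (hn : Fintype.card V = n)
    (hs : (Finset.univ.filter (fun v => G.degree v = 3)).card = s)
    (hstep : ∀ u : V, 1 ≤ ((G.neighborFinset u).filter (fun v => G.degree v = 3)).card →
      ((G.neighborFinset u).filter (fun v => G.degree v = 3)).card + 3 ≤ G.degree u) :
    (3 * (n + s) : ℚ) / 2 ≤ G.edgeFinset.card := by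
  classical
  set Sfin := Finset.univ.filter (fun v => G.degree v = 3) with hSfin
  -- pointwise bound
  have key : ∀ u : V, ((G.neighborFinset u).filter (fun v => G.degree v = 3)).card + 3
      ≤ G.degree u := by
    intro u
    rcases Nat.eq_zero_or_pos ((G.neighborFinset u).filter (fun v => G.degree v = 3)).card with h | h
    · rw [h, zero_add, ← hmin]
      exact G.minDegree_le_degree u
    · exact hstep u h
  -- double counting
  have hdc : ∑ u : V, ((G.neighborFinset u).filter (fun v => G.degree v = 3)).card = 3 * s := by
    have h1 : ∀ u : V, ((G.neighborFinset u).filter (fun v => G.degree v = 3)).card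
        = ∑ v ∈ Sfin, if G.Adj u v then 1 else 0 := by
      intro u
      rw [← Finset.card_filter]
      congr 1
      ext v
      simp [hSfin, mem_neighborFinset, and_comm]
    calc ∑ u : V, ((G.neighborFinset u).filter (fun v => G.degree v = 3)).card
        = ∑ u : V, ∑ v ∈ Sfin, if G.Adj u v then 1 else 0 := by
          exact Finset.sum_congr rfl (fun u _ => h1 u)
      _ = ∑ v ∈ Sfin, ∑ u : V, if G.Adj u v then 1 else 0 := Finset.sum_comm
      _ = ∑ v ∈ Sfin, G.degree v := by
          refine Finset.sum_congr rfl (fun v _ => ?_)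
          rw [← Finset.card_filter, ← card_neighborFinset_eq_degree]
          congr 1
          ext u
          simp [mem_neighborFinset, adj_comm]
      _ = ∑ v ∈ Sfin, 3 := by
          refine Finset.sum_congr rfl (fun v hv => ?_)
          simpa [hSfin] using hv
      _ = 3 * s := by rw [Finset.sum_const, hs]; ring
  have hsum : 3 * s + 3 * n ≤ 2 * G.edgeFinset.card := by
    rw [← G.sum_degrees_eq_twice_card_edges]
    calc 3 * s + 3 * n
        = ∑ u : V, (((G.neighborFinset u).filter (fun v => G.degree v = 3)).card + 3) := by
          rw [Finset.sum_add_distrib, hdc, Finset.sum_const, ← hn]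
          simp [mul_comm, Finset.card_univ]
      _ ≤ ∑ u : V, G.degree u := Finset.sum_le_sum (fun u _ => key u)
  have : (3 * (s + n) : ℚ) ≤ 2 * G.edgeFinset.card := by
    have := (Nat.cast_le (α := ℚ)).mpr hsum
    push_cast at this ⊢
    linarith
  rw [div_le_iff₀ (by norm_num : (0:ℚ) < 2)]
  linarith
end

section
/- The minimum size of a locally nonforesty graph of order 5 is 9. -/
open SimpleGraph

/-!
A vertex whose neighbourhood contains a cycle has degree at least 3, so a locally nonforesty
graph on 5 vertices has degree sum at least 15; this only gives 8 edges. If some vertex `v` has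
degree exactly 3, its neighbourhood is a triangle; any vertex `u` outside the closed
neighbourhood of `v` can only see `N(v)`, and having degree at least 3 it sees all of it. Hence
every neighbour of `v` is adjacent to all other vertices, and the degree sum is at least
`3 · 4 + 2 · 3 = 18`. Conversely `K₅` minus an edge has 9 edges and every vertex lies in a `K₄`.
-/

open Finset

namespace SimpleGraph

variable {V : Type*}

theorem not_isAcyclic_of_adj {G : SimpleGraph V} {a b c : V}
    (hab : G.Adj a b) (hac : G.Adj a c) (hbc : G.Adj b c) : ¬G.IsAcyclic := by
  classical
  exact fun h ↦ h.cliqueFree le_rfl {a, b, c} (is3Clique_triple_iff.mpr ⟨hab, hac, hbc⟩)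

theorem three_le_card_of_not_isAcyclic [Fintype V] {G : SimpleGraph V} (h : ¬G.IsAcyclic) :
    3 ≤ Fintype.card V := by
  by_contra! hV
  exact h <| IsAcyclic.of_card_le_two <| by
    rw [ENat.card_eq_coe_fintype_card]; exact_mod_cast Nat.le_of_lt_succ hV

/-- A cycle has at least three distinct edges, and on three vertices there are only three. -/
theorem eq_top_of_not_isAcyclic_of_card_eq_three [Fintype V] {G : SimpleGraph V}
    (hV : Fintype.card V = 3) (h : ¬G.IsAcyclic) : G = ⊤ := by
  classical
  obtain ⟨v, c, hc⟩ : ∃ (v : V) (c : G.Walk v v), c.IsCycle := by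
    simpa [IsAcyclic] using h
  have hcycle_edges : c.edges.toFinset ⊆ G.edgeFinset := fun e he ↦
    mem_edgeFinset.mpr (c.edges_subset_edgeSet (List.mem_toFinset.mp he))
  have hcard : #(⊤ : SimpleGraph V).edgeFinset ≤ #G.edgeFinset := calc
    #(⊤ : SimpleGraph V).edgeFinset = 3 := by rw [card_edgeFinset_top_eq_card_choose_two, hV]; rfl
    _ ≤ c.length := hc.three_le_length
    _ = #c.edges.toFinset := by rw [List.toFinset_card_of_nodup hc.edges_nodup, c.length_edges]
    _ ≤ #G.edgeFinset := card_le_card hcycle_edges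
  exact edgeFinset_inj.mp <| eq_of_subset_of_card_le (edgeFinset_mono le_top) hcard

theorem neighborFinset_subset_of_not_adj [Fintype V] [DecidableEq V] {G : SimpleGraph V}
    [DecidableRel G.Adj] {u v : V} (huv : u ≠ v) (h : ¬G.Adj u v)
    (hv : G.degree v + 2 = Fintype.card V) : G.neighborFinset u ⊆ G.neighborFinset v := by
  have hsub : G.neighborFinset v ⊆ (univ.erase v).erase u := fun x hx ↦ by
    have hx := (G.mem_neighborFinset v x).mp hx
    simp only [mem_erase, mem_univ, and_true]
    exact ⟨fun hxu ↦ h (hxu ▸ hx.symm), hx.ne'⟩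
  have heq : G.neighborFinset v = (univ.erase v).erase u :=
    eq_of_subset_of_card_le hsub (by
      rw [card_erase_of_mem (by simpa using huv), card_erase_of_mem (mem_univ v), card_univ,
        card_neighborFinset_eq_degree]
      omega)
  rw [heq]
  intro x hx
  have hx := (G.mem_neighborFinset u x).mp hx
  simp only [mem_erase, mem_univ, and_true]
  exact ⟨hx.ne', fun hxv ↦ h (hxv ▸ hx)⟩

theorem ncard_edgeSet_top_deleteEdges_singleton [Fintype V] {u v : V} (huv : u ≠ v) :
    ((⊤ : SimpleGraph V).deleteEdges {s(u, v)}).edgeSet.ncard = (Fintype.card V).choose 2 - 1 := by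
  classical
  rw [edgeSet_deleteEdges, Set.ncard_sdiff_singleton_of_mem (by simpa using huv),
    ← coe_edgeFinset, Set.ncard_coe_finset, card_edgeFinset_top_eq_card_choose_two]

end SimpleGraph

namespace LocallyNonforesty

variable {V : Type*} {G : SimpleGraph V}

theorem of_forall_exists_triangle (h : ∀ v, ∃ a b c, G.Adj v a ∧ G.Adj v b ∧ G.Adj v c ∧
    G.Adj a b ∧ G.Adj a c ∧ G.Adj b c) : LocallyNonforesty G := by
  intro v
  obtain ⟨a, b, c, hva, hvb, hvc, hab, hac, hbc⟩ := h v
  exact not_isAcyclic_of_adj (a := ⟨a, hva⟩) (b := ⟨b, hvb⟩) (c := ⟨c, hvc⟩)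
    (by simpa using hab) (by simpa using hac) (by simpa using hbc)

theorem three_le_degree (hG : LocallyNonforesty G) (v : V) [Fintype (G.neighborSet v)] :
    3 ≤ G.degree v := by
  rw [← card_neighborSet_eq_degree]
  exact three_le_card_of_not_isAcyclic (hG v)

theorem isClique_neighborSet_of_degree_eq_three (hG : LocallyNonforesty G) {v : V}
    [Fintype (G.neighborSet v)] (hv : G.degree v = 3) : G.IsClique (G.neighborSet v) :=
  induce_eq_top.mp <| eq_top_of_not_isAcyclic_of_card_eq_three
    (by rw [card_neighborSet_eq_degree, hv]) (hG v)

variable [Fintype V] [DecidableEq V] [DecidableRel G.Adj]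

theorem isUniversal_of_adj_of_degree_eq_three (hG : LocallyNonforesty G)
    (hV : Fintype.card V = 5) {v a : V} (hv : G.degree v = 3) (ha : G.Adj v a) :
    G.IsUniversal a := by
  intro u hau
  by_cases huv : u = v
  · exact huv ▸ ha.symm
  by_cases hvu : G.Adj v u
  · exact hG.isClique_neighborSet_of_degree_eq_three hv ha hvu hau
  have hN : G.neighborFinset u = G.neighborFinset v :=
    eq_of_subset_of_card_le
      (neighborFinset_subset_of_not_adj huv (fun h ↦ hvu h.symm) (by omega))
      (by simp only [card_neighborFinset_eq_degree, hv, hG.three_le_degree u])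
  exact ((G.mem_neighborFinset u a).mp (hN ▸ (G.mem_neighborFinset v a).mpr ha)).symm

theorem nine_le_card_edgeFinset (hG : LocallyNonforesty G) (hV : Fintype.card V = 5) :
    9 ≤ #G.edgeFinset := by
  suffices 18 ≤ ∑ v, G.degree v by
    rw [sum_degrees_eq_twice_card_edges] at this; omega
  by_cases hmin : ∀ v, 4 ≤ G.degree v
  · calc 18 ≤ #(univ : Finset V) • 4 := by rw [card_univ, hV]; norm_num
      _ ≤ ∑ v, G.degree v := card_nsmul_le_sum _ _ _ fun v _ ↦ hmin v
  push Not at hmin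
  obtain ⟨v, hv⟩ := hmin
  have hv : G.degree v = 3 := le_antisymm (Nat.le_of_lt_succ hv) (hG.three_le_degree v)
  have hN : ∀ a ∈ G.neighborFinset v, 4 ≤ G.degree a := fun a ha ↦ by
    have := (G.degree_eq_card_sub_one a).mpr
      (hG.isUniversal_of_adj_of_degree_eq_three hV hv ((G.mem_neighborFinset v a).mp ha))
    omega
  calc 18 = #(G.neighborFinset v) • 4 + #(G.neighborFinset v)ᶜ • 3 := by
        rw [card_compl, card_neighborFinset_eq_degree, hv, hV]; rfl
    _ ≤ ∑ a ∈ G.neighborFinset v, G.degree a + ∑ a ∈ (G.neighborFinset v)ᶜ, G.degree a :=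
        add_le_add (card_nsmul_le_sum _ _ _ hN)
          (card_nsmul_le_sum _ _ _ fun a _ ↦ hG.three_le_degree a)
    _ = ∑ a, G.degree a := sum_add_sum_compl _ _

end LocallyNonforesty

theorem locallyNonforesty_top_deleteEdges :
    LocallyNonforesty ((⊤ : SimpleGraph (Fin 5)).deleteEdges {s(3, 4)}) := by
  refine LocallyNonforesty.of_forall_exists_triangle fun v ↦ ?_
  fin_cases v
  exacts [⟨1, 2, 3, by simp⟩, ⟨0, 2, 3, by simp⟩, ⟨0, 1, 3, by simp⟩, ⟨0, 1, 2, by simp⟩,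
    ⟨0, 1, 2, by simp⟩]

theorem stmt6 :
    IsLeast {m : ℕ | ∃ G : SimpleGraph (Fin 5),
      LocallyNonforesty G ∧ G.edgeSet.ncard = m} 9 := by
  refine ⟨⟨_, locallyNonforesty_top_deleteEdges,
    ncard_edgeSet_top_deleteEdges_singleton (by decide)⟩, ?_⟩
  rintro m ⟨G, hG, rfl⟩
  classical
  rw [← coe_edgeFinset, Set.ncard_coe_finset]
  exact hG.nine_le_card_edgeFinset (Fintype.card_fin 5)
end

section
/- Let G be a 3-connected locally nonforesty graph whose degree sequence consists of 2k vertices of degree 3 and the remaining vertices of degree 4, where the degree-3 vertices are a_1, ..., a_{2k} and form an independent set, with n = |V(G)| ≥ 8. Then the closed neighborhoods A_i = N[a_i] are pairwise disjoint, and each induces K_4. -/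
open SimpleGraph

/-! A degree-3 vertex `a` of a locally nonforesty graph has a triangle as neighbourhood, so
`N[a]` is a `K₄`. If two such nonadjacent vertices `a`, `b` shared a neighbour `x`, then `x`
would see `a`, `b` and the other two neighbours of each; as `deg x ≤ 4` this forces
`N(a) = N(b)`. Then every vertex of `N(a)` already has its four neighbours in
`{a, b} ∪ N(a)`, so these five vertices form a connected component, contradicting
connectivity and `n ≥ 8`. -/

namespace SimpleGraph

variable {V : Type*}

lemma adj_of_card_eq_three_of_not_isAcyclic [Fintype V] {H : SimpleGraph V}
    (hcard : Fintype.card V = 3) (hcyc : ¬ H.IsAcyclic) {x y : V} (hxy : x ≠ y) :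
    H.Adj x y := by
  classical
  by_contra hnadj
  obtain ⟨z, hz⟩ : ((Finset.univ.erase x).erase y).Nonempty := by
    rw [← Finset.card_pos, Finset.card_erase_of_mem (by simp [Ne.symm hxy]),
      Finset.card_erase_of_mem (Finset.mem_univ _), Finset.card_univ, hcard]
    norm_num
  simp only [Finset.mem_erase, Finset.mem_univ, and_true] at hz
  have hxyz (v : V) : v = x ∨ v = y ∨ v = z := by
    have huniv : ({x, y, z} : Finset V) = Finset.univ :=
      Finset.eq_univ_of_card _ <| hcard ▸ Finset.card_eq_three.2
        ⟨x, y, z, hxy, Ne.symm hz.2, Ne.symm hz.1, rfl⟩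
    simpa using (huniv ▸ Finset.mem_univ v : v ∈ ({x, y, z} : Finset V))
  -- Every edge avoids the missing edge `xy`, hence meets `z`.
  refine hcyc (isAcyclic_starGraph z |>.anti fun u v huv => ?_)
  rw [starGraph_adj]
  refine ⟨huv.ne, ?_⟩
  have := H.loopless
  rcases hxyz u with rfl | rfl | rfl <;> rcases hxyz v with rfl | rfl | rfl <;>
    simp_all [H.adj_comm]

lemma isClique_insert_neighborSet_of_degree_eq_three {G : SimpleGraph V} {a : V}
    [Fintype (G.neighborSet a)] (hcyc : ¬ (G.induce (G.neighborSet a)).IsAcyclic)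
    (ha : G.degree a = 3) : G.IsClique (insert a (G.neighborSet a)) := by
  refine isClique_insert.2 ⟨fun x hx y hy hxy => ?_, fun _ hb _ => hb⟩
  exact adj_of_card_eq_three_of_not_isAcyclic (H := G.induce (G.neighborSet a))
    (by rwa [card_neighborSet_eq_degree]) hcyc (x := ⟨x, hx⟩) (y := ⟨y, hy⟩)
    (by simpa [Subtype.ext_iff] using hxy)

lemma Reachable.mem_of_forall_adj_mem {G : SimpleGraph V} {S : Set V}
    (hS : ∀ u v, G.Adj u v → u ∈ S → v ∈ S) {u v : V} (h : G.Reachable u v) (hu : u ∈ S) :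
    v ∈ S := by
  obtain ⟨p⟩ := h
  induction p with
  | nil => exact hu
  | cons huw _ ih => exact ih (hS _ _ huw hu)

variable [Fintype V] [DecidableEq V] {G : SimpleGraph V} [DecidableRel G.Adj] {a b x : V}

lemma neighborFinset_eq_of_adj_of_adj (hnadj : ¬ G.Adj a b) (hab : a ≠ b)
    (hca : G.IsClique (G.neighborSet a)) (hcb : G.IsClique (G.neighborSet b))
    (hd : G.degree a = G.degree b) (hxa : G.Adj a x) (hxb : G.Adj b x)
    (hx : G.degree x ≤ G.degree a + 1) : G.neighborFinset a = G.neighborFinset b := by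
  set U := G.neighborFinset a ∪ G.neighborFinset b
  have hsub : {a, b} ∪ U.erase x ⊆ G.neighborFinset x := by
    intro z hz
    simp only [U, Finset.mem_union, Finset.mem_insert, Finset.mem_singleton, Finset.mem_erase,
      mem_neighborFinset] at hz ⊢
    rcases hz with (rfl | rfl) | ⟨hzx, hza | hzb⟩
    · exact hxa.symm
    · exact hxb.symm
    · exact hca hxa hza (Ne.symm hzx)
    · exact hcb hxb hzb (Ne.symm hzx)
  have hdisj : Disjoint {a, b} (U.erase x) := by
    simp [U, Finset.disjoint_left, hnadj, G.adj_comm b a]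
  have hU : U.card ≤ G.degree a := by
    have := Finset.card_le_card hsub
    rw [Finset.card_union_of_disjoint hdisj, Finset.card_pair hab, card_neighborFinset_eq_degree,
      Finset.card_erase_of_mem (by simp [U, hxa])] at this
    have : 0 < U.card := Finset.card_pos.2 ⟨x, by simp [U, hxa]⟩
    omega
  have ha : G.neighborFinset a = U := Finset.eq_of_subset_of_card_le Finset.subset_union_left
    (by rwa [card_neighborFinset_eq_degree])
  have hb : G.neighborFinset b = U := Finset.eq_of_subset_of_card_le Finset.subset_union_right
    (by rwa [card_neighborFinset_eq_degree, ← hd])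
  rw [ha, hb]

lemma neighborFinset_eq_insert_insert_erase (hab : a ≠ b)
    (hN : G.neighborFinset a = G.neighborFinset b) (hclique : G.IsClique (G.neighborSet a))
    (hxa : G.Adj a x) (hx : G.degree x ≤ G.degree a + 1) :
    G.neighborFinset x = insert a (insert b ((G.neighborFinset a).erase x)) := by
  have hbN : b ∉ G.neighborFinset a := by simp [hN]
  have hsub : insert a (insert b ((G.neighborFinset a).erase x)) ⊆ G.neighborFinset x := by
    intro z hz
    simp only [Finset.mem_insert, Finset.mem_erase, mem_neighborFinset] at hz ⊢
    rcases hz with rfl | hzb | ⟨hzx, hz⟩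
    · exact hxa.symm
    · have : x ∈ G.neighborFinset b := hN ▸ (G.mem_neighborFinset a x).2 hxa
      exact hzb ▸ ((G.mem_neighborFinset b x).1 this).symm
    · exact hclique hxa hz (Ne.symm hzx)
  refine (Finset.eq_of_subset_of_card_le hsub ?_).symm
  rw [Finset.card_insert_of_notMem (by simp [hab]), Finset.card_insert_of_notMem (by simp [hbN]),
    Finset.card_erase_of_mem (by simpa), card_neighborFinset_eq_degree,
    card_neighborFinset_eq_degree]
  have : 0 < G.degree a := G.degree_pos_iff_exists_adj a |>.2 ⟨x, hxa⟩
  omega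

lemma Connected.card_le_of_neighborFinset_eq (hconn : G.Connected) (hab : a ≠ b)
    (hN : G.neighborFinset a = G.neighborFinset b) (hclique : G.IsClique (G.neighborSet a))
    (hdeg : ∀ x, G.Adj a x → G.degree x ≤ G.degree a + 1) :
    Fintype.card V ≤ G.degree a + 2 := by
  set S := insert a (insert b (G.neighborFinset a))
  have hclosed : ∀ u v, G.Adj u v → u ∈ (S : Set V) → v ∈ (S : Set V) := by
    intro u v huv hu
    simp only [S, Finset.coe_insert, Set.mem_insert_iff, Finset.mem_coe] at hu ⊢
    rcases hu with rfl | rfl | hu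
    · simp [huv]
    · simp [hN, huv]
    · have hu' : G.Adj a u := by simpa using hu
      have := neighborFinset_eq_insert_insert_erase hab hN hclique hu' (hdeg u hu')
        ▸ (G.mem_neighborFinset u v).2 huv
      simp only [Finset.mem_insert, Finset.mem_erase] at this
      tauto
  have hall : Finset.univ ⊆ S := fun v _ =>
    Finset.mem_coe.1 <| (hconn a v).mem_of_forall_adj_mem hclosed (by simp [S])
  calc Fintype.card V = Finset.univ.card := Finset.card_univ.symm
    _ ≤ S.card := Finset.card_le_card hall
    _ ≤ (G.neighborFinset a).card + 2 :=
      (Finset.card_insert_le _ _).trans (Nat.succ_le_succ (Finset.card_insert_le _ _))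
    _ = G.degree a + 2 := by rw [card_neighborFinset_eq_degree]

end SimpleGraph

lemma ThreeConnected.connected {V : Type*} [Fintype V] {G : SimpleGraph V}
    (h : ThreeConnected G) : G.Connected := by
  have := h.2 ∅ (by simp)
  rw [Finset.coe_empty, Set.compl_empty] at this
  exact (induceUnivIso G).connected_iff.mp this

theorem stmt10_general {V : Type*} [Fintype V] (G : SimpleGraph V) [DecidableRel G.Adj]
    (h3 : ThreeConnected G) (hl : LocallyNonforesty G)
    (hn : 8 ≤ Fintype.card V)
    (hdeg : ∀ v : V, G.degree v = 3 ∨ G.degree v = 4)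
    (hind : ∀ a b : V, G.degree a = 3 → G.degree b = 3 → ¬ G.Adj a b) :
    (∀ a b : V, G.degree a = 3 → G.degree b = 3 → a ≠ b →
      Disjoint (insert a (G.neighborSet a)) (insert b (G.neighborSet b))) ∧
    (∀ a : V, G.degree a = 3 → G.IsClique (insert a (G.neighborSet a))) := by
  classical
  have hclique (a : V) (ha : G.degree a = 3) : G.IsClique (insert a (G.neighborSet a)) :=
    isClique_insert_neighborSet_of_degree_eq_three (hl a) ha
  have hnbhd (a : V) (ha : G.degree a = 3) : G.IsClique (G.neighborSet a) :=
    (hclique a ha).subset (Set.subset_insert _ _)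
  have hle (v : V) : G.degree v ≤ 4 := by rcases hdeg v with h | h <;> omega
  refine ⟨fun a b ha hb hab => Set.disjoint_left.2 ?_, hclique⟩
  rintro x (rfl | hxa) (rfl | hxb)
  · exact hab rfl
  · exact hind _ _ hb ha hxb
  · exact hind _ _ ha hb hxa
  have hN := neighborFinset_eq_of_adj_of_adj (hind a b ha hb) hab (hnbhd a ha) (hnbhd b hb)
    (by rw [ha, hb]) hxa hxb (by rw [ha]; exact hle x)
  have := h3.connected.card_le_of_neighborFinset_eq hab hN (hnbhd a ha)
    (fun y _ => by rw [ha]; exact hle y)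
  omega

theorem stmt10 {V : Type*} [Fintype V] (G : SimpleGraph V) [DecidableRel G.Adj]
    (k : ℕ) (h3 : ThreeConnected G) (hl : LocallyNonforesty G)
    (hn : 8 ≤ Fintype.card V)
    (hdeg : ∀ v : V, G.degree v = 3 ∨ G.degree v = 4)
    (hs : (Finset.univ.filter (fun v => G.degree v = 3)).card = 2 * k)
    (hind : ∀ a b : V, G.degree a = 3 → G.degree b = 3 → ¬ G.Adj a b) :
    (∀ a b : V, G.degree a = 3 → G.degree b = 3 → a ≠ b →
      Disjoint (insert a (G.neighborSet a)) (insert b (G.neighborSet b))) ∧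
    (∀ a : V, G.degree a = 3 → G.IsClique (insert a (G.neighborSet a))) :=
  stmt10_general G h3 hl hn hdeg hind
end

section
/- There is no 3-connected locally nonforesty graph of order 8k+3 (k ≥ 1) and size 15k+6. -/
open SimpleGraph

/-
Let `T` (`degThree`) be the set of vertices of degree 3. Since every neighbourhood contains a cycle,
all degrees are at least 3 and the neighbourhood of a vertex of `T` is a triangle. Then
3-connectivity forces `T` to be independent, and a vertex `u` with a neighbour in `T` has at least
three neighbours outside `T`: otherwise two of them would cut off `u` together with its neighbours
in `T`.

Split the vertices outside `T` into the set `A` (`attached`) of those adjacent to `T` and the set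
`R` (`remote`) of the remaining ones. Counting the degree sum `30k + 12` over the `8k + 3` vertices
leaves `|T| = 2k + 1` or `|T| = 2k`, and in both cases all the inequalities above are tight. If
`|T| = 2k + 1`, exactly one vertex of `A` would have two neighbours in `T`. But two vertices of `T`
adjacent to `u` have neighbourhoods that meet outside `u`, so such vertices come in pairs. If
`|T| = 2k`, every vertex of `A` lies in exactly one `K₄` spanned by a vertex of `T` and its
neighbourhood and has a single neighbour outside it, and `|R| = 3`. The cycle in the neighbourhood
of a vertex `x ∈ R` then either makes `x` a cut vertex separating a whole `K₄`, or produces four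
vertices of `R`.
-/

open Finset

theorem Finset.forall_le_of_sum_le_card_mul {ι : Type*} {s : Finset ι} {f : ι → ℕ} {c : ℕ}
    (hf : ∀ i ∈ s, c ≤ f i) (hs : ∑ i ∈ s, f i ≤ #s * c) : ∀ i ∈ s, f i ≤ c := by
  have hsum : ∑ _i ∈ s, c = ∑ i ∈ s, f i := by
    rw [sum_const, smul_eq_mul] at *
    exact le_antisymm (by simpa using card_nsmul_le_sum s f c hf) hs
  exact fun i hi => ((sum_eq_sum_iff_of_le hf).mp hsum i hi).ge

namespace SimpleGraph

variable {W : Type*} {H : SimpleGraph W}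

theorem exists_isCycle_of_not_isAcyclic (h : ¬ H.IsAcyclic) :
    ∃ (v : W) (c : H.Walk v v), c.IsCycle := by
  simpa [IsAcyclic] using h

theorem exists_adj_adj_of_not_isAcyclic (h : ¬ H.IsAcyclic) :
    ∃ a b c, a ≠ c ∧ H.Adj b a ∧ H.Adj b c := by
  obtain ⟨v, c, hc⟩ := exists_isCycle_of_not_isAcyclic h
  exact ⟨c.snd, v, c.penultimate, hc.snd_ne_penultimate, c.adj_snd hc.not_nil,
    (c.adj_penultimate hc.not_nil).symm⟩

theorem three_le_card_of_not_isAcyclic_s12 [Fintype W] (h : ¬ H.IsAcyclic) :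
    3 ≤ Fintype.card W := by
  obtain ⟨v, c, hc⟩ := exists_isCycle_of_not_isAcyclic h
  calc 3 ≤ c.length := hc.three_le_length
    _ = c.support.tail.length := by simp
    _ ≤ Fintype.card W := hc.support_nodup.length_le_card

theorem eq_top_of_not_isAcyclic [Fintype W] [DecidableEq W] [DecidableRel H.Adj]
    (hW : Fintype.card W ≤ 3) (h : ¬ H.IsAcyclic) : H = ⊤ := by
  obtain ⟨v, c, hc⟩ := exists_isCycle_of_not_isAcyclic h
  have hsub : c.edges.toFinset ⊆ H.edgeFinset := fun e he => by
    simpa using c.edges_subset_edgeSet (List.mem_toFinset.mp he)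
  have hc3 : 3 ≤ #c.edges.toFinset := by
    rw [List.toFinset_card_of_nodup hc.edges_nodup, Walk.length_edges]
    exact hc.three_le_length
  have htop : #(⊤ : SimpleGraph W).edgeFinset ≤ 3 := by
    rw [card_edgeFinset_top_eq_card_choose_two]
    interval_cases Fintype.card W <;> simp
  rw [← edgeFinset_inj]
  exact eq_of_subset_of_card_le (edgeFinset_subset_edgeFinset.mpr le_top)
    (by have := card_le_card hsub; omega)

end SimpleGraph

section General

variable {V : Type*} {G : SimpleGraph V}

theorem LocallyNonforesty.exists_adj_commonNeighbors_nontrivial (h : LocallyNonforesty G)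
    (x : V) : ∃ p, G.Adj x p ∧ (G.commonNeighbors x p).Nontrivial := by
  obtain ⟨⟨y₁, hy₁⟩, ⟨p, hp⟩, ⟨y₂, hy₂⟩, hne, h₁, h₂⟩ := exists_adj_adj_of_not_isAcyclic (h x)
  exact ⟨p, hp, y₁, ⟨hy₁, h₁⟩, y₂, ⟨hy₂, h₂⟩, fun h => hne (Subtype.ext h)⟩

variable [Fintype V] [DecidableRel G.Adj]

theorem LocallyNonforesty.three_le_degree_s12 (h : LocallyNonforesty G) (v : V) :
    3 ≤ G.degree v := by
  rw [← card_neighborSet_eq_degree]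
  exact three_le_card_of_not_isAcyclic_s12 (h v)

theorem LocallyNonforesty.adj_of_degree_eq_three (h : LocallyNonforesty G) {v x y : V}
    (hv : G.degree v = 3) (hx : G.Adj v x) (hy : G.Adj v y) (hxy : x ≠ y) : G.Adj x y := by
  classical
  suffices (G.induce (G.neighborSet v)).Adj ⟨x, hx⟩ ⟨y, hy⟩ from this
  rw [eq_top_of_not_isAcyclic (by rw [card_neighborSet_eq_degree, hv]) (h v), top_adj]
  exact fun h => hxy (congrArg Subtype.val h)

variable [DecidableEq V]

theorem ThreeConnected.card_le_of_neighborFinset_subset (h : ThreeConnected G) {C S : Finset V}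
    (hS : #S ≤ 2) (hCS : Disjoint C S) (hC : C.Nonempty)
    (hclosed : ∀ a ∈ C, G.neighborFinset a ⊆ C ∪ S) : Fintype.card V ≤ #C + #S := by
  by_contra! hlt
  obtain ⟨w, -, hw⟩ := exists_mem_notMem_of_card_lt_card
    ((card_union_le C S).trans_lt (hlt.trans_eq (card_univ (α := V)).symm))
  obtain ⟨u, hu⟩ := hC
  have huS : u ∉ S := disjoint_left.mp hCS hu
  have hwS : w ∉ S := fun hwS => hw (mem_union_right C hwS)
  obtain ⟨p⟩ := (h.2 S hS).preconnected ⟨u, by simpa using huS⟩ ⟨w, by simpa using hwS⟩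
  obtain ⟨d, -, hdC, hdC'⟩ :=
    p.exists_boundary_dart {z | z.1 ∈ C} hu fun hwC => hw (mem_union_left S hwC)
  have hd := hclosed _ hdC ((G.mem_neighborFinset _ _).mpr d.adj)
  rcases mem_union.mp hd with hd | hd
  · exact hdC' hd
  · exact d.snd.2 (by simpa using hd)

end General

namespace SimpleGraph

variable {V : Type*} [Fintype V] (G : SimpleGraph V) [DecidableRel G.Adj]

def degThree : Finset V := {v | G.degree v = 3}

variable {G} in
@[simp] theorem mem_degThree {v : V} : v ∈ G.degThree ↔ G.degree v = 3 := by simp [degThree]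

variable {G} {u v w x p : V}

theorem notMem_degThree_of_adj (hind : G.IsIndepSet G.degThree) (hv : v ∈ G.degThree)
    (hvw : G.Adj v w) : w ∉ G.degThree :=
  fun hw => hind hv hw hvw.ne hvw

variable [DecidableEq V]

variable (G) in
def attached : Finset V := {u | G.degree u ≠ 3 ∧ (G.neighborFinset u ∩ G.degThree).Nonempty}

variable (G) in
def remote : Finset V := {u | G.degree u ≠ 3 ∧ Disjoint (G.neighborFinset u) G.degThree}

@[simp] theorem mem_attached :
    u ∈ G.attached ↔ G.degree u ≠ 3 ∧ (G.neighborFinset u ∩ G.degThree).Nonempty := by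
  simp [attached]

@[simp] theorem mem_remote :
    u ∈ G.remote ↔ G.degree u ≠ 3 ∧ Disjoint (G.neighborFinset u) G.degThree := by
  simp [remote]

theorem mem_remote_iff_notMem : u ∈ G.remote ↔ u ∉ G.degThree ∧ u ∉ G.attached := by
  simp only [mem_remote, mem_attached, mem_degThree, disjoint_iff_inter_eq_empty,
    ← not_nonempty_iff_eq_empty]
  tauto

theorem not_adj_of_mem_remote (hx : x ∈ G.remote) (hv : v ∈ G.degThree) : ¬ G.Adj x v :=
  fun hxv => Finset.disjoint_left.mp (mem_remote.mp hx).2 ((G.mem_neighborFinset _ _).mpr hxv) hv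

theorem LocallyNonforesty.four_le_degree_of_mem_remote (hlnf : LocallyNonforesty G)
    (hu : u ∈ G.remote) : 4 ≤ G.degree u := by
  have := hlnf.three_le_degree_s12 u
  have := (mem_remote.mp hu).1
  omega

variable (G) in
theorem sum_degThree_add_sum_attached_add_sum_remote {M : Type*} [AddCommMonoid M] (f : V → M) :
    ∑ v ∈ G.degThree, f v + ∑ u ∈ G.attached, f u + ∑ u ∈ G.remote, f u = ∑ v, f v := by
  rw [← sum_filter_add_sum_filter_not univ (fun v => G.degree v = 3),
    ← sum_filter_add_sum_filter_not (univ.filter fun v => ¬ G.degree v = 3)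
      (fun u => (G.neighborFinset u ∩ G.degThree).Nonempty), filter_filter, filter_filter,
    add_assoc]
  congr 3
  ext u
  simp [disjoint_iff_inter_eq_empty, not_nonempty_iff_eq_empty]

variable (G) in
theorem card_degThree_add_card_attached_add_card_remote :
    #G.degThree + #G.attached + #G.remote = Fintype.card V := by
  simpa only [sum_const, smul_eq_mul, mul_one, card_univ] using
    G.sum_degThree_add_sum_attached_add_sum_remote (fun _ => (1 : ℕ))

variable (G) in
theorem sum_card_neighborFinset_inter_comm (s t : Finset V) :
    ∑ u ∈ s, #(G.neighborFinset u ∩ t) = ∑ v ∈ t, #(G.neighborFinset v ∩ s) := by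
  convert sum_card_bipartiteAbove_eq_sum_card_bipartiteBelow G.Adj (s := s) (t := t) using 3
  · ext; simp [bipartiteAbove, and_comm]
  · ext; simp [bipartiteBelow, and_comm, adj_comm]

theorem mem_attached_of_adj (hind : G.IsIndepSet G.degThree) (hv : v ∈ G.degThree)
    (hvw : G.Adj v w) : w ∈ G.attached :=
  mem_attached.mpr ⟨mem_degThree.not.mp (notMem_degThree_of_adj hind hv hvw),
    ⟨v, mem_inter.mpr ⟨(G.mem_neighborFinset _ _).mpr hvw.symm, hv⟩⟩⟩

theorem sum_attached_card_inter_degThree (hind : G.IsIndepSet G.degThree) :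
    ∑ u ∈ G.attached, #(G.neighborFinset u ∩ G.degThree) = 3 * #G.degThree := by
  rw [sum_card_neighborFinset_inter_comm, sum_const_nat fun v hv => ?_, mul_comm]
  rw [inter_eq_left.mpr fun w hw => mem_attached_of_adj hind hv ((G.mem_neighborFinset _ _).mp hw),
    card_neighborFinset_eq_degree, mem_degThree.mp hv]

theorem sum_degree_eq_two_mul_card_edgeFinset (hind : G.IsIndepSet G.degThree) :
    6 * #G.degThree + ∑ u ∈ G.attached, #(G.neighborFinset u \ G.degThree)
      + ∑ u ∈ G.remote, G.degree u = 2 * #G.edgeFinset := by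
  have hT : ∑ v ∈ G.degThree, G.degree v = 3 * #G.degThree := by
    rw [sum_const_nat fun v hv => mem_degThree.mp hv, mul_comm]
  have hA : ∑ u ∈ G.attached, G.degree u = 3 * #G.degThree
      + ∑ u ∈ G.attached, #(G.neighborFinset u \ G.degThree) := by
    rw [← sum_attached_card_inter_degThree hind, ← sum_add_distrib]
    exact sum_congr rfl fun u _ => (card_inter_add_card_sdiff _ _).symm
  rw [← sum_degrees_eq_twice_card_edges, ← G.sum_degThree_add_sum_attached_add_sum_remote, hT, hA]
  ring

theorem LocallyNonforesty.erase_neighborFinset_subset (hlnf : LocallyNonforesty G)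
    (hind : G.IsIndepSet G.degThree) (hv : v ∈ G.degThree) (huv : G.Adj u v) :
    (G.neighborFinset v).erase u ⊆ G.neighborFinset u \ G.degThree := by
  intro w hw
  obtain ⟨hwu, hvw⟩ := mem_erase.mp hw
  rw [mem_neighborFinset] at hvw
  exact mem_sdiff.mpr ⟨(G.mem_neighborFinset _ _).mpr
    (hlnf.adj_of_degree_eq_three (mem_degThree.mp hv) huv.symm hvw hwu.symm),
    notMem_degThree_of_adj hind hv hvw⟩

theorem card_erase_neighborFinset (hv : v ∈ G.degThree) (hvu : G.Adj v u) :
    #((G.neighborFinset v).erase u) = 2 := by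
  rw [card_erase_of_mem ((G.mem_neighborFinset _ _).mpr hvu), card_neighborFinset_eq_degree,
    mem_degThree.mp hv]

theorem ThreeConnected.isIndepSet_degThree (h3c : ThreeConnected G) (hlnf : LocallyNonforesty G)
    (h5 : 5 ≤ Fintype.card V) : G.IsIndepSet G.degThree := by
  intro v hv w hw _ hvw
  set S := (G.neighborFinset v).erase w
  have hS : #S = 2 := card_erase_neighborFinset hv hvw
  have hvS : v ∉ S := fun h => G.irrefl ((G.mem_neighborFinset _ _).mp (mem_of_mem_erase h))
  have hNw : G.neighborFinset w = insert v S := by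
    refine (eq_of_subset_of_card_le (insert_subset_iff.mpr ⟨?_, fun s hs => ?_⟩) ?_).symm
    · exact (G.mem_neighborFinset _ _).mpr hvw.symm
    · obtain ⟨hsw, hvs⟩ := mem_erase.mp hs
      exact (G.mem_neighborFinset _ _).mpr (hlnf.adj_of_degree_eq_three (mem_degThree.mp hv) hvw
        ((G.mem_neighborFinset _ _).mp hvs) hsw.symm)
    · rw [card_insert_of_notMem hvS, hS, card_neighborFinset_eq_degree, mem_degThree.mp hw]
  have hcard := h3c.card_le_of_neighborFinset_subset (C := {v, w}) hS.le (by simp [hvS, S])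
    (insert_nonempty v {w}) (by
      intro a ha
      rcases mem_insert.mp ha with rfl | ha
      · rw [← insert_erase ((G.mem_neighborFinset _ _).mpr hvw)]
        exact insert_subset (by simp) subset_union_right
      · rw [mem_singleton.mp ha, hNw]
        exact insert_subset (by simp) subset_union_right)
  have := card_le_two (a := v) (b := w)
  omega

theorem ThreeConnected.three_le_card_sdiff_degThree (h3c : ThreeConnected G)
    (hlnf : LocallyNonforesty G) (hind : G.IsIndepSet G.degThree)
    (hcard : #G.degThree + 3 < Fintype.card V) (hu : u ∈ G.attached) :
    3 ≤ #(G.neighborFinset u \ G.degThree) := by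
  obtain ⟨v, hv⟩ := (mem_attached.mp hu).2
  obtain ⟨huv, hvT⟩ := mem_inter.mp hv
  rw [mem_neighborFinset] at huv
  set S := (G.neighborFinset v).erase u
  have hS : #S = 2 := card_erase_neighborFinset hvT huv.symm
  have hSsub : S ⊆ G.neighborFinset u \ G.degThree := hlnf.erase_neighborFinset_subset hind hvT huv
  by_contra! hlt
  have hSeq : S = G.neighborFinset u \ G.degThree := eq_of_subset_of_card_le hSsub (by omega)
  -- `S` separates `u` and its neighbours of degree 3 from the rest of the graph
  have hsep := h3c.card_le_of_neighborFinset_subset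
    (C := insert u (G.neighborFinset u ∩ G.degThree)) hS.le ?_ (insert_nonempty _ _) ?_
  · have := card_insert_le u (G.neighborFinset u ∩ G.degThree)
    have := card_le_card (inter_subset_right (s₁ := G.neighborFinset u) (s₂ := G.degThree))
    omega
  · rw [disjoint_insert_left, hSeq]
    exact ⟨fun h => G.irrefl ((G.mem_neighborFinset _ _).mp (mem_sdiff.mp h).1),
      disjoint_sdiff_inter _ _ |>.symm⟩
  · intro a ha
    rcases mem_insert.mp ha with rfl | ha
    · intro b hb
      by_cases hbT : b ∈ G.degThree
      · exact mem_union_left _ (mem_insert_of_mem (mem_inter.mpr ⟨hb, hbT⟩))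
      · exact mem_union_right _ (hSeq ▸ mem_sdiff.mpr ⟨hb, hbT⟩)
    · obtain ⟨hua, haT⟩ := mem_inter.mp ha
      rw [mem_neighborFinset] at hua
      rw [← insert_erase ((G.mem_neighborFinset _ _).mpr hua.symm)]
      exact insert_subset (mem_union_left _ (mem_insert_self _ _))
        ((hSeq.symm ▸ hlnf.erase_neighborFinset_subset hind haT hua).trans subset_union_right)

theorem LocallyNonforesty.exists_ne_two_le_card_inter_degThree (hlnf : LocallyNonforesty G)
    (hind : G.IsIndepSet G.degThree) (hO : #(G.neighborFinset u \ G.degThree) ≤ 3)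
    (h2 : 2 ≤ #(G.neighborFinset u ∩ G.degThree)) :
    ∃ w ∈ G.attached, w ≠ u ∧ 2 ≤ #(G.neighborFinset w ∩ G.degThree) := by
  obtain ⟨v₁, hv₁, v₂, hv₂, hv₁₂⟩ := one_lt_card.mp h2
  simp only [mem_inter, mem_neighborFinset] at hv₁ hv₂
  -- the two pairs `N(vᵢ) - u` both lie in the three non-degree-3 neighbours of `u`
  obtain ⟨w, hw⟩ := inter_nonempty_of_card_lt_card_add_card
    (hlnf.erase_neighborFinset_subset hind hv₁.2 hv₁.1)
    (hlnf.erase_neighborFinset_subset hind hv₂.2 hv₂.1)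
    (by rw [card_erase_neighborFinset hv₁.2 hv₁.1.symm, card_erase_neighborFinset hv₂.2 hv₂.1.symm]
        omega)
  simp only [mem_inter, mem_erase, mem_neighborFinset] at hw
  obtain ⟨⟨hwu, hv₁w⟩, -, hv₂w⟩ := hw
  refine ⟨w, mem_attached_of_adj hind hv₁.2 hv₁w, hwu, ?_⟩
  calc 2 = #{v₁, v₂} := (card_pair hv₁₂).symm
    _ ≤ _ := card_le_card (by simp [insert_subset_iff, hv₁w.symm, hv₂w.symm, hv₁.2, hv₂.2])

theorem LocallyNonforesty.sum_attached_card_inter_degThree_ne (hlnf : LocallyNonforesty G)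
    (hind : G.IsIndepSet G.degThree)
    (hO : ∀ u ∈ G.attached, #(G.neighborFinset u \ G.degThree) ≤ 3) :
    ∑ u ∈ G.attached, #(G.neighborFinset u ∩ G.degThree) ≠ #G.attached + 1 := by
  intro hsum
  have hpos : ∀ u ∈ G.attached, 1 ≤ #(G.neighborFinset u ∩ G.degThree) :=
    fun u hu => card_pos.mpr (mem_attached.mp hu).2
  obtain ⟨u, hu, hu2⟩ := exists_lt_of_sum_lt (s := G.attached) (f := fun _ => 1)
    (g := fun u => #(G.neighborFinset u ∩ G.degThree))
    (by rw [sum_const, smul_eq_mul, mul_one, hsum]; omega)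
  obtain ⟨w, hw, hwu, hw2⟩ := hlnf.exists_ne_two_le_card_inter_degThree hind (hO u hu) hu2
  have hsub : {u, w} ⊆ G.attached := insert_subset hu (singleton_subset_iff.mpr hw)
  have hrest := card_nsmul_le_sum (G.attached \ {u, w}) _ 1 fun x hx => hpos x (mem_sdiff.mp hx).1
  rw [← sum_sdiff hsub, sum_pair hwu.symm] at hsum
  rw [card_sdiff_of_subset hsub, card_pair hwu.symm, smul_eq_mul, mul_one] at hrest
  have := card_le_card hsub
  rw [card_pair hwu.symm] at this
  omega

theorem LocallyNonforesty.neighborFinset_subset_of_adj_remote (hlnf : LocallyNonforesty G)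
    (hind : G.IsIndepSet G.degThree) (hu₁ : #(G.neighborFinset u ∩ G.degThree) ≤ 1)
    (hu₃ : #(G.neighborFinset u \ G.degThree) ≤ 3) (hv : v ∈ G.degThree) (huv : G.Adj u v)
    (hx : x ∈ G.remote) (hux : G.Adj u x) :
    G.neighborFinset u ⊆ insert x (insert v (G.neighborFinset v)) := by
  intro w hw
  by_cases hwT : w ∈ G.degThree
  · rw [card_le_one.mp hu₁ w (mem_inter.mpr ⟨hw, hwT⟩) v
      (mem_inter.mpr ⟨(G.mem_neighborFinset _ _).mpr huv, hv⟩)]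
    exact mem_insert_of_mem (mem_insert_self _ _)
  have hxv : x ∉ (G.neighborFinset v).erase u := fun h =>
    not_adj_of_mem_remote hx hv ((G.mem_neighborFinset _ _).mp (mem_of_mem_erase h)).symm
  have hsub : insert x ((G.neighborFinset v).erase u) ⊆ G.neighborFinset u \ G.degThree :=
    insert_subset
      (mem_sdiff.mpr ⟨(G.mem_neighborFinset _ _).mpr hux, (mem_remote_iff_notMem.mp hx).1⟩)
      (hlnf.erase_neighborFinset_subset hind hv huv)
  have heq := eq_of_subset_of_card_le hsub
    (by rw [card_insert_of_notMem hxv, card_erase_neighborFinset hv huv.symm]; exact hu₃)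
  have hw' := heq ▸ mem_sdiff.mpr ⟨hw, hwT⟩
  rcases mem_insert.mp hw' with rfl | hw'
  · exact mem_insert_self _ _
  · exact mem_insert_of_mem (mem_insert_of_mem (mem_of_mem_erase hw'))

theorem LocallyNonforesty.commonNeighbors_subset_remote (hlnf : LocallyNonforesty G)
    (hind : G.IsIndepSet G.degThree)
    (hA₁ : ∀ u ∈ G.attached, #(G.neighborFinset u ∩ G.degThree) ≤ 1)
    (hA₃ : ∀ u ∈ G.attached, #(G.neighborFinset u \ G.degThree) ≤ 3)
    (hx : x ∈ G.remote) (hp : p ∈ G.remote) (hxp : x ≠ p) :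
    G.commonNeighbors x p ⊆ G.remote := by
  rintro y ⟨hxy, hpy⟩
  rw [mem_neighborSet] at hxy hpy
  rw [Finset.mem_coe, mem_remote_iff_notMem]
  refine ⟨fun hyT => not_adj_of_mem_remote hx hyT hxy, fun hyA => ?_⟩
  obtain ⟨v, hv⟩ := (mem_attached.mp hyA).2
  obtain ⟨hyv, hvT⟩ := mem_inter.mp hv
  have := hlnf.neighborFinset_subset_of_adj_remote hind (hA₁ y hyA) (hA₃ y hyA) hvT
    ((G.mem_neighborFinset _ _).mp hyv) hx hxy.symm ((G.mem_neighborFinset _ _).mpr hpy.symm)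
  simp only [mem_insert, mem_neighborFinset] at this
  rcases this with h | h | h
  · exact hxp h.symm
  · exact (mem_remote_iff_notMem.mp hp).1 (h ▸ hvT)
  · exact not_adj_of_mem_remote hp hvT h.symm

theorem ThreeConnected.notMem_attached_of_commonNeighbors_nontrivial (h3c : ThreeConnected G)
    (hlnf : LocallyNonforesty G) (hind : G.IsIndepSet G.degThree) (h6 : 6 ≤ Fintype.card V)
    (hA₁ : ∀ u ∈ G.attached, #(G.neighborFinset u ∩ G.degThree) ≤ 1)
    (hA₃ : ∀ u ∈ G.attached, #(G.neighborFinset u \ G.degThree) ≤ 3)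
    (hx : x ∈ G.remote) (hxp : G.Adj x p) (hnt : (G.commonNeighbors x p).Nontrivial) :
    p ∉ G.attached := by
  intro hp
  obtain ⟨v, hv⟩ := (mem_attached.mp hp).2
  obtain ⟨hpv, hvT⟩ := mem_inter.mp hv
  rw [mem_neighborFinset] at hpv
  have hNsub : ∀ z ∈ G.neighborFinset v, G.Adj x z →
      G.neighborFinset z ⊆ insert x (insert v (G.neighborFinset v)) := fun z hz hxz =>
    have hzA := mem_attached_of_adj hind hvT ((G.mem_neighborFinset _ _).mp hz)
    hlnf.neighborFinset_subset_of_adj_remote hind (hA₁ z hzA) (hA₃ z hzA) hvT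
      ((G.mem_neighborFinset _ _).mp hz).symm hx hxz.symm
  have hcommon : G.commonNeighbors x p ⊆ (G.neighborFinset v).erase p := by
    rintro y ⟨hxy, hpy⟩
    rw [mem_neighborSet] at hxy hpy
    have := hNsub p ((G.mem_neighborFinset _ _).mpr hpv.symm) hxp
      ((G.mem_neighborFinset _ _).mpr hpy)
    rcases mem_insert.mp this with rfl | this
    · exact absurd hxy G.irrefl
    rcases mem_insert.mp this with rfl | hy
    · exact absurd hxy (not_adj_of_mem_remote hx hvT)
    · exact mem_erase.mpr ⟨hpy.ne.symm, hy⟩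
  -- the two common neighbours of `x` and `p` exhaust `N(v) - p`
  have hxN : ∀ z ∈ G.neighborFinset v, G.Adj x z := by
    obtain ⟨y₁, hy₁, y₂, hy₂, hy₁₂⟩ := hnt
    have heq : {y₁, y₂} = (G.neighborFinset v).erase p :=
      eq_of_subset_of_card_le (insert_subset (hcommon hy₁) (singleton_subset_iff.mpr (hcommon hy₂)))
        (by rw [card_pair hy₁₂, card_erase_neighborFinset hvT hpv.symm])
    intro z hz
    by_cases hzp : z = p
    · exact hzp ▸ hxp
    · have := heq ▸ mem_erase.mpr ⟨hzp, hz⟩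
      rcases mem_insert.mp this with rfl | this
      · exact hy₁.1
      · exact (mem_singleton.mp this) ▸ hy₂.1
  have hxC : x ∉ insert v (G.neighborFinset v) := by
    rw [mem_insert, mem_neighborFinset, not_or]
    exact ⟨fun h => (mem_remote_iff_notMem.mp hx).1 (h ▸ hvT),
      fun h => not_adj_of_mem_remote hx hvT h.symm⟩
  have hsep := h3c.card_le_of_neighborFinset_subset (C := insert v (G.neighborFinset v))
    (S := {x}) (by simp) (disjoint_singleton_right.mpr hxC) (insert_nonempty _ _) (by
      rw [union_comm, ← insert_eq]
      intro a ha
      rcases mem_insert.mp ha with rfl | ha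
      · exact (subset_insert _ _).trans (subset_insert _ _)
      · exact hNsub a ha (hxN a ha))
  have := card_insert_le v (G.neighborFinset v)
  rw [card_neighborFinset_eq_degree, mem_degThree.mp hvT] at this
  rw [card_singleton] at hsep
  omega

theorem ThreeConnected.four_le_card_remote (h3c : ThreeConnected G)
    (hlnf : LocallyNonforesty G) (hind : G.IsIndepSet G.degThree) (h6 : 6 ≤ Fintype.card V)
    (hA₁ : ∀ u ∈ G.attached, #(G.neighborFinset u ∩ G.degThree) ≤ 1)
    (hA₃ : ∀ u ∈ G.attached, #(G.neighborFinset u \ G.degThree) ≤ 3)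
    (hR : G.remote.Nonempty) : 4 ≤ #G.remote := by
  obtain ⟨x, hx⟩ := hR
  obtain ⟨p, hxp, hnt⟩ := hlnf.exists_adj_commonNeighbors_nontrivial x
  have hp : p ∈ G.remote := mem_remote_iff_notMem.mpr
    ⟨fun hpT => not_adj_of_mem_remote hx hpT hxp,
      h3c.notMem_attached_of_commonNeighbors_nontrivial hlnf hind h6 hA₁ hA₃ hx hxp hnt⟩
  obtain ⟨y₁, hy₁, y₂, hy₂, hy₁₂⟩ := hnt
  have hsub := hlnf.commonNeighbors_subset_remote hind hA₁ hA₃ hx hp hxp.ne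
  obtain ⟨hxy₁, hpy₁⟩ := G.mem_commonNeighbors.mp hy₁
  obtain ⟨hxy₂, hpy₂⟩ := G.mem_commonNeighbors.mp hy₂
  calc 4 = #{x, p, y₁, y₂} := by
        rw [card_insert_of_notMem, card_insert_of_notMem, card_pair hy₁₂]
        · simp [hpy₁.ne, hpy₂.ne]
        · simp [hxp.ne, hxy₁.ne, hxy₂.ne]
    _ ≤ #G.remote := card_le_card (by
        simp [insert_subset_iff, hx, hp, mem_coe.mp (hsub hy₁), mem_coe.mp (hsub hy₂)])

end SimpleGraph

theorem stmt12_general (k : ℕ) :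
    ¬ ∃ G : SimpleGraph (Fin (8 * k + 3)), ThreeConnected G ∧ LocallyNonforesty G ∧
      G.edgeSet.ncard = 15 * k + 6 := by
  classical
  rintro ⟨G, h3c, hlnf, hm⟩
  have hn := Fintype.card_fin (8 * k + 3)
  have h4 := h3c.1
  rw [← coe_edgeFinset, Set.ncard_coe_finset] at hm
  have hind := h3c.isIndepSet_degThree hlnf (by omega)
  have hpart := G.card_degThree_add_card_attached_add_card_remote
  have hT := G.sum_attached_card_inter_degThree hind
  have hsum := G.sum_degree_eq_two_mul_card_edgeFinset hind
  have hA₁ : ∀ u ∈ G.attached, 1 ≤ #(G.neighborFinset u ∩ G.degThree) :=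
    fun u hu => card_pos.mpr (mem_attached.mp hu).2
  have hA₃ : ∀ u ∈ G.attached, 3 ≤ #(G.neighborFinset u \ G.degThree) :=
    fun u hu => h3c.three_le_card_sdiff_degThree hlnf hind (by omega) hu
  have hA := card_nsmul_le_sum _ _ _ hA₁
  have hO := card_nsmul_le_sum _ _ _ hA₃
  have hR := card_nsmul_le_sum _ _ _ fun u hu => hlnf.four_le_degree_of_mem_remote hu
  simp only [smul_eq_mul] at hA hO hR
  have hO' := forall_le_of_sum_le_card_mul hA₃ (by omega)
  rcases (by omega : #G.degThree = 2 * k + 1 ∨ #G.degThree = 2 * k) with ht | ht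
  · exact hlnf.sum_attached_card_inter_degThree_ne hind hO' (by omega)
  · have := h3c.four_le_card_remote hlnf hind (by omega)
      (forall_le_of_sum_le_card_mul hA₁ (by omega)) hO' (card_pos.mp (by omega))
    omega

theorem stmt12 (k : ℕ) (hk : 1 ≤ k) :
    ¬ ∃ G : SimpleGraph (Fin (8 * k + 3)), ThreeConnected G ∧ LocallyNonforesty G ∧
      G.edgeSet.ncard = 15 * k + 6 :=
  stmt12_general k
end

section
/- For every integer n ≥ 8 with n ≡ 0, 4, or 7 (mod 8), there exists a 3-connected locally nonforesty graph of order n with exactly 2n - ⌊n/8⌋ edges. -/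
open SimpleGraph

/-!
Cut `0, …, n - 1` into `M = ⌈n / 4⌉` windows of four consecutive vertices (when `n ≡ 3 mod 4`
the last two windows share one vertex) and make every window a `K₄`; then every neighbourhood
contains a triangle. Link the windows cyclically, window `q` to window `q + 1 mod M`, and by
chords, window `i` to window `i + ⌊M / 2⌋`, each link by one edge, so that no vertex lies on two
links. Deleting two vertices leaves every window nonempty and destroys at most two links, and a
cycle with these chords survives the loss of any two links: a chord always crosses between the
two arcs left by two cuts of the cycle. The edge count is `6M + M + ⌈M / 2⌉`, minus one when
`n ≡ 3 mod 4`, which is `2n - ⌊n / 8⌋` for `n ≡ 0, 4, 7 mod 8`.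
-/

theorem Finset.notMem_of_card_le_two {α : Type*} [DecidableEq α] {S : Finset α}
    (hS : S.card ≤ 2) {a b c : α} (hab : a ≠ b) (hac : a ≠ c) (hbc : b ≠ c)
    (ha : a ∈ S) (hb : b ∈ S) : c ∉ S := fun hc => by
  have := Finset.card_le_card (s := {a, b, c}) (t := S) (by simp [Finset.insert_subset_iff, *])
  rw [Finset.card_eq_three.2 ⟨a, b, c, hab, hac, hbc, rfl⟩] at this
  omega

theorem locallyNonforesty_of_forall_exists_triangle {V : Type*} {G : SimpleGraph V}
    (h : ∀ v, ∃ a b c, G.Adj v a ∧ G.Adj v b ∧ G.Adj v c ∧ G.Adj a b ∧ G.Adj a c ∧ G.Adj b c) :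
    LocallyNonforesty G := by
  classical
  intro v hv
  obtain ⟨a, b, c, ha, hb, hc, hab, hac, hbc⟩ := h v
  exact hv.cliqueFree le_rfl {⟨a, ha⟩, ⟨b, hb⟩, ⟨c, hc⟩}
    (is3Clique_triple_iff.2 ⟨by simpa using hab, by simpa using hac, by simpa using hbc⟩)

namespace SimpleGraph

variable {V ι : Type*} (G : SimpleGraph V) (s : Set V) (B : ι → Set V)

def BlocksLinked (i j : ι) : Prop :=
  ∀ u w : s, (u : V) ∈ B i → (w : V) ∈ B j → (G.induce s).Reachable u w

variable {G s B}

theorem BlocksLinked.refl (hB : ∀ i, G.IsClique (B i)) (i : ι) : G.BlocksLinked s B i i := by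
  intro u w hu hw
  obtain rfl | huw := eq_or_ne u w
  · rfl
  · exact Adj.reachable (hB i hu hw (Subtype.coe_ne_coe.2 huw))

theorem blocksLinked_equivalence (hB : ∀ i, G.IsClique (B i)) (hne : ∀ i, (B i ∩ s).Nonempty) :
    Equivalence (G.BlocksLinked s B) where
  refl := BlocksLinked.refl hB
  symm h u w hu hw := (h w u hw hu).symm
  trans {_ j _} hij hjk u w hu hw := by
    obtain ⟨z, hzj, hzs⟩ := hne j
    exact (hij u ⟨z, hzs⟩ hu hzj).trans (hjk ⟨z, hzs⟩ w hzj hw)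

theorem BlocksLinked.of_adj (hB : ∀ i, G.IsClique (B i)) {i j : ι} {u w : V}
    (hu : u ∈ B i ∩ s) (hw : w ∈ B j ∩ s) (huw : u = w ∨ G.Adj u w) :
    G.BlocksLinked s B i j := by
  intro u' w' hu' hw'
  have hmid : (G.induce s).Reachable ⟨u, hu.2⟩ ⟨w, hw.2⟩ := by
    obtain rfl | h := huw
    · rfl
    · exact Adj.reachable h
  exact ((BlocksLinked.refl hB i u' ⟨u, hu.2⟩ hu' hu.1).trans hmid).trans
    (BlocksLinked.refl hB j ⟨w, hw.2⟩ w' hw.1 hw')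

theorem connected_induce_of_blocksLinked {i₀ : ι} (hi₀ : (B i₀ ∩ s).Nonempty)
    (hcover : ∀ v ∈ s, ∃ i, v ∈ B i ∧ G.BlocksLinked s B i₀ i) : (G.induce s).Connected := by
  obtain ⟨z, hzB, hzs⟩ := hi₀
  have hz (u : s) : (G.induce s).Reachable ⟨z, hzs⟩ u := by
    obtain ⟨i, hui, hi⟩ := hcover u u.2
    exact hi ⟨z, hzs⟩ u hzB hui
  have : Nonempty s := ⟨⟨z, hzs⟩⟩
  exact ⟨fun u w => (hz u).symm.trans (hz w)⟩

end SimpleGraph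

theorem exists_chord_across_arc {M h a b : ℕ} (hh : 1 ≤ h) (hM : 2 * h ≤ M) (hab : a < b)
    (hb : b < M) : ∃ i, i + h < M ∧ ¬((a < i ∧ i ≤ b) ↔ (a < i + h ∧ i + h ≤ b)) := by
  by_cases hshort : b - a ≤ h
  · by_cases hfit : a + 1 + h < M
    · exact ⟨a + 1, by omega, by omega⟩
    · exact ⟨b - h, by omega, by omega⟩
  · exact ⟨a, by omega, by omega⟩

theorem Equivalence.rel_of_rel_succ {R : ℕ → ℕ → Prop} (hR : Equivalence R) {a b : ℕ} (hab : a ≤ b)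
    (h : ∀ j, a ≤ j → j < b → R j (j + 1)) : R a b := by
  induction b, hab using Nat.le_induction with
  | base => exact hR.refl a
  | succ b hab ih => exact hR.trans (ih fun j h₁ h₂ => h j h₁ (by omega)) (h b hab (by omega))

/-! `D` is a set of deleted links of the cycle `0, …, M - 1` with chords: `inl q` is the cycle
link from `q` to `q + 1 mod M` and `inr i` the chord from `i` to `i + h`. -/

namespace CycleWithChords

open Sum

variable {M h : ℕ} {R : ℕ → ℕ → Prop} {D : Finset (ℕ ⊕ ℕ)}

theorem rel_zero_of_outside (hR : Equivalence R)
    (hstep : ∀ j, j + 1 < M → inl j ∉ D → R j (j + 1)) (hwrap : inl (M - 1) ∉ D → R (M - 1) 0)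
    {lo hi : ℕ} (hlohi : lo ≤ hi) (halive : ∀ j < M, j ≠ lo → j ≠ hi → inl j ∉ D)
    {q : ℕ} (hq : q < M) (hout : q ≤ lo ∨ hi < q) : R 0 q := by
  rcases hout with hqlo | hhiq
  · exact hR.rel_of_rel_succ (Nat.zero_le q) fun j _ hj =>
      hstep j (by omega) (halive j (by omega) (by omega) (by omega))
  · have hqM : R q (M - 1) := hR.rel_of_rel_succ (by omega) fun j h₁ h₂ =>
      hstep j (by omega) (halive j (by omega) (by omega) (by omega))
    exact hR.symm (hR.trans hqM (hwrap (halive _ (by omega) (by omega) (by omega))))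

theorem rel_zero_of_two_cuts (hh : 1 ≤ h) (hM : 2 * h ≤ M) (hR : Equivalence R)
    (hD : D.card ≤ 2) (hstep : ∀ j, j + 1 < M → inl j ∉ D → R j (j + 1))
    (hwrap : inl (M - 1) ∉ D → R (M - 1) 0) (hchord : ∀ i, i + h < M → inr i ∉ D → R i (i + h))
    {lo hi : ℕ} (hlohi : lo < hi) (hhi : hi < M) (hloD : inl lo ∈ D) (hhiD : inl hi ∈ D)
    {q : ℕ} (hq : q < M) : R 0 q := by
  have hcuts : (inl lo : ℕ ⊕ ℕ) ≠ inl hi := by simpa using hlohi.ne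
  have alive {j : ℕ} (hjlo : j ≠ lo) (hjhi : j ≠ hi) : inl j ∉ D :=
    Finset.notMem_of_card_le_two hD hcuts (by simpa using hjlo.symm) (by simpa using hjhi.symm)
      hloD hhiD
  have hout {q : ℕ} (hq : q < M) (hside : q ≤ lo ∨ hi < q) : R 0 q :=
    rel_zero_of_outside hR hstep hwrap hlohi.le (fun j _ => alive) hq hside
  have hin {q : ℕ} (hloq : lo < q) (hqhi : q ≤ hi) : R (lo + 1) q :=
    hR.rel_of_rel_succ hloq fun j h₁ h₂ => hstep j (by omega) (alive (by omega) (by omega))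
  have hchord' {i : ℕ} (hi : i + h < M) : R i (i + h) :=
    hchord i hi (Finset.notMem_of_card_le_two hD hcuts inl_ne_inr inl_ne_inr hloD hhiD)
  -- a chord with exactly one end in the arc `(lo, hi]` joins the two arcs left by the cuts
  obtain ⟨i, hiM, hcross⟩ := exists_chord_across_arc hh hM hlohi hhi
  have bridge : R 0 (lo + 1) := by
    by_cases hiin : lo < i ∧ i ≤ hi
    · exact hR.trans (hout hiM (by omega)) (hR.symm (hR.trans (hin hiin.1 hiin.2) (hchord' hiM)))
    · exact hR.trans (hR.trans (hout (by omega) (by omega)) (hchord' hiM))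
        (hR.symm (hin (by omega) (by omega)))
  by_cases hqin : lo < q ∧ q ≤ hi
  · exact hR.trans bridge (hin hqin.1 hqin.2)
  · exact hout hq (by omega)

theorem rel_zero (hh : 1 ≤ h) (hM : 2 * h ≤ M) (hR : Equivalence R) (hD : D.card ≤ 2)
    (hcycle : ∀ q < M, inl q ∉ D → R q (if q + 1 = M then 0 else q + 1))
    (hchord : ∀ i, i + h < M → inr i ∉ D → R i (i + h)) {q : ℕ} (hq : q < M) : R 0 q := by
  have hstep (j : ℕ) (hj : j + 1 < M) (hjD : inl j ∉ D) : R j (j + 1) := by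
    simpa [hj.ne] using hcycle j (by omega) hjD
  have hwrap (hwD : inl (M - 1) ∉ D) : R (M - 1) 0 := by
    simpa [show M - 1 + 1 = M by omega] using hcycle (M - 1) (by omega) hwD
  by_cases hcut : ∃ a, a + 1 < M ∧ inl a ∈ D
  swap
  · push Not at hcut
    exact hR.rel_of_rel_succ (Nat.zero_le q) fun j _ hj => hstep j (by omega) (hcut j (by omega))
  obtain ⟨a, ha, haD⟩ := hcut
  by_cases hcut' : ∃ b < M, b ≠ a ∧ inl b ∈ D
  swap
  · push Not at hcut'
    exact rel_zero_of_outside hR hstep hwrap le_rfl (fun j hj hja _ => hcut' j hj hja) hq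
      (le_or_gt q a)
  obtain ⟨b, hb, hba, hbD⟩ := hcut'
  rcases lt_or_gt_of_ne hba with hlt | hlt
  · exact rel_zero_of_two_cuts hh hM hR hD hstep hwrap hchord hlt (by omega) hbD haD hq
  · exact rel_zero_of_two_cuts hh hM hR hD hstep hwrap hchord hlt hb haD hbD hq

end CycleWithChords

namespace K4Necklace

open Finset Sum

def numBlocks (n : ℕ) : ℕ := (n + 3) / 4

def chordLength (n : ℕ) : ℕ := numBlocks n / 2

def base (n q : ℕ) : ℕ := min (4 * q) (n - 4)

def window (n q : ℕ) : Finset ℕ := Ico (base n q) (base n q + 4)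

def next (n q : ℕ) : ℕ := if q + 1 = numBlocks n then 0 else q + 1

/-- Offsets `3` and `0` of a window carry the cycle links to the next and from the previous
window, offsets `1` and `2` the chords. For `n ≡ 3 mod 4` the cycle link between the last two
windows is their shared vertex, a diagonal and hence no edge. -/
def link (n : ℕ) : ℕ ⊕ ℕ → Sym2 ℕ
  | inl q => s(base n q + 3, base n (next n q))
  | inr i => s(base n i + 1, base n (i + chordLength n) + 2)

def blockOf (n v : ℕ) : ℕ := min (v / 4) (numBlocks n - 1)

def linkIndices (n : ℕ) : Finset (ℕ ⊕ ℕ) :=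
  (range (numBlocks n)).disjSum (range (numBlocks n - chordLength n))

def properLinks (n : ℕ) : Finset (ℕ ⊕ ℕ) :=
  (linkIndices n).filter fun l => ¬(link n l).IsDiag

def blockEdges (n q : ℕ) : Finset (Sym2 ℕ) := (window n q).offDiag.image Sym2.mk.uncurry

def edges (n : ℕ) : Finset (Sym2 ℕ) :=
  (range (numBlocks n)).biUnion (blockEdges n) ∪
    (properLinks n).image (link n)

def graph (n : ℕ) : SimpleGraph (Fin n) :=
  SimpleGraph.fromEdgeSet {e | e.map Fin.val ∈ edges n}

variable {n : ℕ}

theorem mem_window {q x : ℕ} : x ∈ window n q ↔ base n q ≤ x ∧ x < base n q + 4 := mem_Ico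

theorem lt_of_mem_window (hn : 4 ≤ n) {q x : ℕ} (hx : x ∈ window n q) : x < n := by
  rw [mem_window, base] at hx; omega

theorem window_min (q : ℕ) : window n (min q (numBlocks n - 1)) = window n q := by
  simp only [window, base, numBlocks]
  rw [show min (4 * min q ((n + 3) / 4 - 1)) (n - 4) = min (4 * q) (n - 4) by omega]

theorem eq_of_mem_window_of_mem_window (h4 : n % 4 = 0 ∨ n % 4 = 3) {p q x y : ℕ}
    (hp : p < numBlocks n) (hq : q < numBlocks n) (hpq : p ≠ q)
    (hxp : x ∈ window n p) (hyp : y ∈ window n p) (hxq : x ∈ window n q) (hyq : y ∈ window n q) :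
    x = y := by
  simp only [mem_window, base, numBlocks] at *; omega

theorem mem_window_blockOf (hn : 4 ≤ n) {v : ℕ} (hv : v < n) : v ∈ window n (blockOf n v) := by
  simp only [mem_window, base, blockOf, numBlocks]; omega

theorem blockOf_lt {v : ℕ} (hv : v < n) : blockOf n v < numBlocks n := by
  simp only [blockOf, numBlocks]; omega

theorem next_spec {q : ℕ} (hq : q < numBlocks n) :
    (q + 1 = numBlocks n ∧ next n q = 0) ∨ (q + 1 < numBlocks n ∧ next n q = q + 1) := by
  unfold next; split_ifs <;> omega

theorem eq_of_mem_link (h4 : n % 4 = 0 ∨ n % 4 = 3) {l l' : ℕ ⊕ ℕ} {v : ℕ}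
    (hl : l ∈ linkIndices n) (hl' : l' ∈ linkIndices n) (hv : v ∈ link n l) (hv' : v ∈ link n l') :
    l = l' := by
  rcases l with q | i <;> rcases l' with q' | i' <;>
    simp only [linkIndices, inl_mem_disjSum, inr_mem_disjSum, mem_range] at hl hl' <;>
    simp only [link, Sym2.mem_iff, inl.injEq, inr.injEq, reduceCtorEq] at hv hv' ⊢
  · have := next_spec hl; have := next_spec hl'
    simp only [base, numBlocks] at *; omega
  · have := next_spec hl
    simp only [base, chordLength, numBlocks] at *; omega
  · have := next_spec hl'
    simp only [base, chordLength, numBlocks] at *; omega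
  · simp only [base, chordLength, numBlocks] at *; omega

theorem link_isDiag_iff (hn : 7 ≤ n) {l : ℕ ⊕ ℕ} (hl : l ∈ linkIndices n) :
    (link n l).IsDiag ↔ n % 4 = 3 ∧ l = inl (numBlocks n - 2) := by
  rcases l with q | i <;>
    simp only [linkIndices, inl_mem_disjSum, inr_mem_disjSum, mem_range] at hl <;>
    simp only [link, Sym2.mk_isDiag_iff, inl.injEq, reduceCtorEq, and_false, iff_false]
  · have := next_spec hl
    simp only [base, numBlocks] at *; omega
  · simp only [base, chordLength, numBlocks] at *; omega

theorem card_properLinks (hn : 7 ≤ n) :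
    (properLinks n).card + (if n % 4 = 3 then 1 else 0) =
      numBlocks n + (numBlocks n - chordLength n) := by
  have hdiag : (linkIndices n).filter (fun l => (link n l).IsDiag) =
      if n % 4 = 3 then {inl (numBlocks n - 2)} else ∅ := by
    ext l
    simp only [mem_filter]
    constructor
    · rintro ⟨hl, hd⟩
      obtain ⟨h3, rfl⟩ := (link_isDiag_iff hn hl).1 hd
      simp [h3]
    · split_ifs with h3
      · rintro hl
        rw [mem_singleton] at hl
        subst hl
        have hmem : inl (numBlocks n - 2) ∈ linkIndices n := by
          simp only [linkIndices, inl_mem_disjSum, mem_range, numBlocks]; omega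
        exact ⟨hmem, (link_isDiag_iff hn hmem).2 ⟨h3, rfl⟩⟩
      · simp
  have htotal := card_filter_add_card_filter_not (s := linkIndices n)
    (fun l => (link n l).IsDiag)
  rw [hdiag, linkIndices, card_disjSum, card_range, card_range] at htotal
  rw [properLinks, linkIndices]
  split_ifs at htotal ⊢ <;> simp only [card_singleton, card_empty] at htotal <;> omega

theorem mem_blockEdges {q : ℕ} {e : Sym2 ℕ} :
    e ∈ blockEdges n q ↔ ¬e.IsDiag ∧ ∀ v ∈ e, v ∈ window n q := by
  induction e using Sym2.ind with
  | _ x y =>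
    simp only [blockEdges, mem_image, mem_offDiag, Prod.exists, Function.uncurry_apply_pair,
      Sym2.mk_isDiag_iff, Sym2.mem_iff, forall_eq_or_imp, forall_eq, Sym2.eq_iff]
    constructor
    · rintro ⟨a, b, ⟨ha, hb, hab⟩, ⟨rfl, rfl⟩ | ⟨rfl, rfl⟩⟩
      exacts [⟨hab, ha, hb⟩, ⟨hab.symm, hb, ha⟩]
    · rintro ⟨hxy, hx, hy⟩
      exact ⟨x, y, ⟨hx, hy, hxy⟩, .inl ⟨rfl, rfl⟩⟩

theorem card_blockEdges (q : ℕ) : (blockEdges n q).card = 6 := by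
  rw [blockEdges, Sym2.card_image_offDiag, window, Nat.card_Ico, Nat.add_sub_cancel_left]
  rfl

theorem link_notMem_blockEdges (hn : 7 ≤ n) (h4 : n % 4 = 0 ∨ n % 4 = 3) {l : ℕ ⊕ ℕ}
    (hl : l ∈ linkIndices n) {q : ℕ} (hq : q < numBlocks n) : link n l ∉ blockEdges n q := by
  rw [mem_blockEdges]
  rintro ⟨hnd, hw⟩
  rcases l with p | i <;>
    simp only [linkIndices, inl_mem_disjSum, inr_mem_disjSum, mem_range] at hl <;>
    simp only [link, Sym2.mem_iff, forall_eq_or_imp, forall_eq, Sym2.mk_isDiag_iff,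
      mem_window] at hw hnd
  · have := next_spec hl
    simp only [base, numBlocks] at *; omega
  · simp only [base, chordLength, numBlocks] at *; omega

theorem lt_of_mem_link (hn : 4 ≤ n) {l : ℕ ⊕ ℕ} {v : ℕ} (hv : v ∈ link n l) : v < n := by
  rcases l with q | i <;> simp only [link, Sym2.mem_iff, base] at hv <;> omega

theorem mk_mem_edges_of_mem_window (hn : 4 ≤ n) {q x y : ℕ} (hx : x ∈ window n q)
    (hy : y ∈ window n q) (hxy : x ≠ y) : s(x, y) ∈ edges n := by
  rw [← window_min] at hx hy
  refine mem_union_left _ (mem_biUnion.2 ⟨_, mem_range.2 ?_,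
    mem_image.2 ⟨(x, y), mem_offDiag.2 ⟨hx, hy, hxy⟩, rfl⟩⟩)
  simp only [numBlocks]
  omega

theorem link_mem_edges {l : ℕ ⊕ ℕ} (hl : l ∈ linkIndices n) (hnd : ¬(link n l).IsDiag) :
    link n l ∈ edges n :=
  mem_union_right _ (mem_image_of_mem _ (mem_filter.2 ⟨hl, hnd⟩))

theorem not_isDiag_of_mem_edges {e : Sym2 ℕ} (he : e ∈ edges n) : ¬e.IsDiag := by
  simp only [edges, mem_union, mem_biUnion, mem_image, properLinks, mem_filter] at he
  obtain ⟨q, -, he⟩ | ⟨l, ⟨-, hnd⟩, rfl⟩ := he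
  · exact (mem_blockEdges.1 he).1
  · exact hnd

theorem lt_of_mem_edges (hn : 4 ≤ n) {e : Sym2 ℕ} (he : e ∈ edges n) {v : ℕ} (hv : v ∈ e) :
    v < n := by
  simp only [edges, mem_union, mem_biUnion, mem_image] at he
  obtain ⟨q, -, he⟩ | ⟨l, -, rfl⟩ := he
  · exact lt_of_mem_window hn ((mem_blockEdges.1 he).2 v hv)
  · exact lt_of_mem_link hn hv

theorem card_edges (hn : 7 ≤ n) (h4 : n % 4 = 0 ∨ n % 4 = 3) :
    (edges n).card = 6 * numBlocks n + (properLinks n).card := by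
  rw [edges, card_union_of_disjoint, card_biUnion, card_image_of_injOn]
  · simp [card_blockEdges, mul_comm]
  · intro l hl l' hl' hll'
    rw [mem_coe, properLinks, mem_filter] at hl hl'
    exact eq_of_mem_link h4 hl.1 hl'.1 (Sym2.out_fst_mem _) (hll' ▸ Sym2.out_fst_mem _)
  · intro p hp q hq hpq
    rw [Function.onFun, Finset.disjoint_left]
    intro e hep heq
    obtain ⟨hnd, hwp⟩ := mem_blockEdges.1 hep
    obtain ⟨-, hwq⟩ := mem_blockEdges.1 heq
    refine hnd ?_
    induction e using Sym2.ind with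
    | _ x y =>
      simp only [Sym2.mem_iff, forall_eq_or_imp, forall_eq] at hwp hwq
      exact eq_of_mem_window_of_mem_window h4 (mem_range.1 hp) (mem_range.1 hq) hpq
        hwp.1 hwp.2 hwq.1 hwq.2
  · rw [Finset.disjoint_left]
    simp only [mem_biUnion, mem_range, mem_image, properLinks, mem_filter, not_exists, not_and]
    rintro e ⟨q, hq, he⟩ l hl rfl
    exact link_notMem_blockEdges hn h4 hl.1 hq he

def block (n q : ℕ) : Set (Fin n) := {v | ↑v ∈ window n q}

theorem mem_block {q : ℕ} {v : Fin n} : v ∈ block n q ↔ ↑v ∈ window n q := Iff.rfl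

theorem graph_adj {u v : Fin n} : (graph n).Adj u v ↔ s(u.val, v.val) ∈ edges n ∧ u ≠ v := by
  simp [graph, SimpleGraph.fromEdgeSet_adj]

theorem ncard_edgeSet_graph (hn : 4 ≤ n) : (graph n).edgeSet.ncard = (edges n).card := by
  rw [← Set.ncard_coe_finset,
    ← Set.ncard_image_of_injective _ (Sym2.map.injective Fin.val_injective)]
  congr 1
  ext e
  constructor
  · rintro ⟨e, he, rfl⟩
    induction e using Sym2.ind with
    | _ u v => exact (graph_adj.1 he).1
  · intro he
    induction e using Sym2.ind with
    | _ x y =>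
      refine ⟨s(⟨x, lt_of_mem_edges hn he (Sym2.mem_mk_left x y)⟩,
        ⟨y, lt_of_mem_edges hn he (Sym2.mem_mk_right x y)⟩), ?_, rfl⟩
      refine graph_adj.2 ⟨he, fun h => not_isDiag_of_mem_edges he ?_⟩
      exact Sym2.mk_isDiag_iff.2 (congrArg Fin.val h)

theorem isClique_block (hn : 4 ≤ n) (q : ℕ) : (graph n).IsClique (block n q) :=
  fun _ hu _ hv huv => graph_adj.2 ⟨mk_mem_edges_of_mem_window hn hu hv (Fin.val_ne_of_ne huv), huv⟩

theorem locallyNonforesty_graph (hn : 4 ≤ n) : LocallyNonforesty (graph n) := by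
  refine locallyNonforesty_of_forall_exists_triangle fun v => ?_
  have hv := mem_window_blockOf hn v.isLt
  rw [mem_window] at hv
  have hb : base n (blockOf n v) + 3 < n := by simp only [base]; omega
  let w (k : ℕ) : Fin n := ⟨base n (blockOf n v) + (v - base n (blockOf n v) + k) % 4, by omega⟩
  have hw (k : ℕ) : w k ∈ block n (blockOf n v) := by
    simp only [mem_block, mem_window, w]; omega
  have adj {j k : ℕ} (hj : j < 4) (hk : k < 4) (hjk : j ≠ k) : (graph n).Adj (w j) (w k) :=
    isClique_block hn _ (hw j) (hw k) (by simp only [w, ne_eq, Fin.ext_iff]; omega)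
  have hv0 : v = w 0 := Fin.ext (by simp only [w]; omega)
  rw [hv0]
  exact ⟨w 1, w 2, w 3, adj (by omega) (by omega) (by omega), adj (by omega) (by omega) (by omega),
    adj (by omega) (by omega) (by omega), adj (by omega) (by omega) (by omega),
    adj (by omega) (by omega) (by omega), adj (by omega) (by omega) (by omega)⟩

theorem block_inter_compl_nonempty (hn : 4 ≤ n) {S : Finset (Fin n)} (hS : S.card ≤ 2) (q : ℕ) :
    (block n q ∩ (↑S)ᶜ).Nonempty := by
  have hb : base n q + 3 < n := by simp only [base]; omega
  by_contra hempty
  have hmem (k : ℕ) (hk : k < 3) : (⟨base n q + k, by omega⟩ : Fin n) ∈ S := by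
    by_contra hk'
    exact hempty ⟨_, mem_block.2 (mem_window.2 ⟨Nat.le_add_right _ _, by simp only; omega⟩), hk'⟩
  exact Finset.notMem_of_card_le_two hS (by simp) (by simp) (by simp)
    (hmem 0 (by omega)) (hmem 1 (by omega)) (hmem 2 (by omega))

def deadLinks (n : ℕ) (S : Finset (Fin n)) : Finset (ℕ ⊕ ℕ) :=
  (linkIndices n).filter fun l => ∃ v ∈ S, ↑v ∈ link n l

theorem card_deadLinks_le (h4 : n % 4 = 0 ∨ n % 4 = 3) (S : Finset (Fin n)) :
    (deadLinks n S).card ≤ S.card := by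
  refine card_le_card_of_forall_subsingleton (fun l v => ↑v ∈ link n l) (fun l hl => ?_) ?_
  · exact (mem_filter.1 hl).2
  · intro v _ l hl l' hl'
    exact eq_of_mem_link h4 (mem_filter.1 hl.1).1 (mem_filter.1 hl'.1).1 hl.2 hl'.2

theorem blocksLinked_of_link (hn : 4 ≤ n) {S : Finset (Fin n)} {l : ℕ ⊕ ℕ}
    (hl : l ∈ linkIndices n) (hlD : l ∉ deadLinks n S) {p q x y : ℕ} (hxy : link n l = s(x, y))
    (hx : x ∈ window n p) (hy : y ∈ window n q) :
    (graph n).BlocksLinked (↑S)ᶜ (block n) p q := by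
  have alive {z : ℕ} (hz : z ∈ link n l) : (⟨z, lt_of_mem_link hn hz⟩ : Fin n) ∉ S :=
    fun hzS => hlD (mem_filter.2 ⟨hl, _, hzS, hz⟩)
  have hxl : x ∈ link n l := hxy ▸ Sym2.mem_mk_left x y
  have hyl : y ∈ link n l := hxy ▸ Sym2.mem_mk_right x y
  refine BlocksLinked.of_adj (isClique_block hn) ⟨hx, alive hxl⟩ ⟨hy, alive hyl⟩ ?_
  by_cases hxy' : x = y
  · exact .inl (Fin.ext hxy')
  · refine .inr (graph_adj.2 ⟨?_, fun h => hxy' (congrArg Fin.val h)⟩)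
    rw [← hxy]
    exact link_mem_edges hl (hxy ▸ Sym2.mk_isDiag_iff.not.2 hxy')

theorem connected_induce_compl_graph (hn : 7 ≤ n) (h4 : n % 4 = 0 ∨ n % 4 = 3)
    (S : Finset (Fin n)) (hS : S.card ≤ 2) : ((graph n).induce (↑S)ᶜ).Connected := by
  have hne := block_inter_compl_nonempty (by omega) hS
  have hcycle (q : ℕ) (hq : q < numBlocks n) (hqD : inl q ∉ deadLinks n S) :
      (graph n).BlocksLinked (↑S)ᶜ (block n) q (next n q) :=
    blocksLinked_of_link (by omega) (inl_mem_disjSum.2 (mem_range.2 hq)) hqD rfl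
      (mem_window.2 ⟨Nat.le_add_right _ _, by omega⟩) (mem_window.2 ⟨le_rfl, by omega⟩)
  have hchord (i : ℕ) (hi : i + chordLength n < numBlocks n) (hiD : inr i ∉ deadLinks n S) :
      (graph n).BlocksLinked (↑S)ᶜ (block n) i (i + chordLength n) :=
    blocksLinked_of_link (by omega) (inr_mem_disjSum.2 (mem_range.2 (by omega))) hiD rfl
      (mem_window.2 ⟨by omega, by omega⟩) (mem_window.2 ⟨by omega, by omega⟩)
  refine connected_induce_of_blocksLinked (hne 0) fun v _ =>
    ⟨blockOf n v, mem_window_blockOf (by omega) v.isLt, CycleWithChords.rel_zero ?_ ?_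
      (blocksLinked_equivalence (isClique_block (by omega)) hne)
      ((card_deadLinks_le h4 S).trans hS) hcycle hchord (blockOf_lt v.isLt)⟩
  · simp only [chordLength, numBlocks]; omega
  · simp only [chordLength]; omega

theorem threeConnected_graph (hn : 7 ≤ n) (h4 : n % 4 = 0 ∨ n % 4 = 3) :
    ThreeConnected (graph n) :=
  ⟨by rw [Fintype.card_fin]; omega, connected_induce_compl_graph hn h4⟩

theorem ncard_edgeSet_graph_eq (hn : 7 ≤ n) (hr : n % 8 = 0 ∨ n % 8 = 4 ∨ n % 8 = 7) :
    (graph n).edgeSet.ncard = 2 * n - n / 8 := by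
  have hlinks := card_properLinks hn
  rw [ncard_edgeSet_graph (by omega), card_edges hn (by omega)]
  simp only [chordLength, numBlocks] at hlinks ⊢
  split_ifs at hlinks <;> omega

end K4Necklace

theorem stmt15 (n : ℕ) (hn : 8 ≤ n)
    (hr : n % 8 = 0 ∨ n % 8 = 4 ∨ n % 8 = 7) :
    ∃ G : SimpleGraph (Fin n), ThreeConnected G ∧ LocallyNonforesty G ∧
      G.edgeSet.ncard = 2 * n - n / 8 :=
  ⟨K4Necklace.graph n, K4Necklace.threeConnected_graph (by omega) (by omega),
    K4Necklace.locallyNonforesty_graph (by omega), K4Necklace.ncard_edgeSet_graph_eq (by omega) hr⟩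
end

section
/- For every integer n ≥ 8, f(n) ≤ 2n < 7(n-1)/3, where f(n) = 2n - ⌊n/8⌋ if n ≡ 0, 4, 7 (mod 8) and f(n) = 2n + 1 - ⌊n/8⌋ otherwise; hence the minimum size f(n) of a 3-connected locally nonforesty graph of order n is strictly less than 7(n-1)/3. -/
open SimpleGraph

def f (n : ℕ) : ℕ :=
  if n % 8 = 0 ∨ n % 8 = 4 ∨ n % 8 = 7 then 2 * n - n / 8 else 2 * n + 1 - n / 8

theorem stmt17 (n : ℕ) (hn : 8 ≤ n) :
    f n ≤ 2 * n ∧ (2 * n : ℚ) < 7 * (n - 1) / 3 ∧ (f n : ℚ) < 7 * (n - 1) / 3 := by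
  have hd : 1 ≤ n / 8 := Nat.one_le_div_iff (by norm_num) |>.mpr hn
  have h1 : f n ≤ 2 * n := by
    unfold f; split
    · omega
    · omega
  have h2 : (2 * n : ℚ) < 7 * (n - 1) / 3 := by
    have : (8 : ℚ) ≤ n := by exact_mod_cast hn
    linarith
  refine ⟨h1, h2, lt_of_le_of_lt ?_ h2⟩
  exact_mod_cast Nat.cast_le.mpr h1
end

section
/- Let G be a 3-connected graph of order n ≥ 8 whose degree sequence is (3 repeated 2k times, 4 repeated 6k+1 times) with n = 8k+1, in which the closed neighborhoods A_1,...,A_{2k} of the degree-3 vertices each induce K_4 and are pairwise disjoint, and let x be the unique vertex outside their union. Then |N(x) ∩ A_i| ≤ 1 for each i, and consequently N(x) is an independent set. -/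
open SimpleGraph

theorem stmt18 {V : Type*} [Fintype V] (G : SimpleGraph V) [DecidableRel G.Adj]
    (k : ℕ) (h3 : ThreeConnected G) (hcard : Fintype.card V = 8 * k + 1)
    (hdeg : ∀ v : V, G.degree v = 3 ∨ G.degree v = 4)
    (hs : (Finset.univ.filter (fun v => G.degree v = 3)).card = 2 * k)
    (hclique : ∀ a : V, G.degree a = 3 → G.IsClique (insert a (G.neighborSet a)))
    (hdisj : ∀ a b : V, G.degree a = 3 → G.degree b = 3 → a ≠ b →
      Disjoint (insert a (G.neighborSet a)) (insert b (G.neighborSet b)))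
    (x : V) (hx : ∀ a : V, G.degree a = 3 → x ∉ insert a (G.neighborSet a)) :
    (∀ a : V, G.degree a = 3 →
      (G.neighborSet x ∩ insert a (G.neighborSet a)).ncard ≤ 1) ∧
    ∀ u ∈ G.neighborSet x, ∀ v ∈ G.neighborSet x, ¬ G.Adj u v := by
  classical
  -- membership transfer between finset and set versions of closed neighborhoods
  have memAiff : ∀ a u : V, u ∈ insert a (G.neighborFinset a) ↔
      u ∈ (insert a (G.neighborSet a) : Set V) := by
    intro a u
    simp [mem_neighborFinset, Set.mem_insert_iff, mem_neighborSet]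
  have hk : 1 ≤ k := by
    have := h3.1; omega
  have hAcard : ∀ a : V, G.degree a = 3 → (insert a (G.neighborFinset a)).card = 4 := by
    intro a h3a
    rw [Finset.card_insert_of_notMem (notMem_neighborFinset_self G a),
      card_neighborFinset_eq_degree, h3a]
  -- neighbors of degree-3 vertices have degree 4
  have hdeg4 : ∀ a u : V, G.degree a = 3 → G.Adj a u → G.degree u = 4 := by
    intro a u h3a hau
    rcases hdeg u with h3u | h4u
    · exfalso
      have hne : a ≠ u := G.ne_of_adj hau
      have hd := hdisj a u h3a h3u hne
      exact (Set.disjoint_left.mp hd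
        (Set.mem_insert_of_mem a ((mem_neighborSet G a u).mpr hau)))
        (Set.mem_insert u _)
    · exact h4u
  -- key: the neighborhood of a neighbor u of a degree-3 vertex a with x adjacent to u
  have key : ∀ a u : V, G.degree a = 3 → G.Adj a u → G.Adj x u →
      G.neighborFinset u = insert x ((insert a (G.neighborFinset a)).erase u) := by
    intro a u h3a hau hxu
    have hu4 : G.degree u = 4 := hdeg4 a u h3a hau
    have hxA : x ∉ insert a (G.neighborFinset a) := fun h => hx a h3a ((memAiff a x).mp h)
    have huA : u ∈ insert a (G.neighborFinset a) :=
      Finset.mem_insert_of_mem ((mem_neighborFinset G a u).mpr hau)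
    have hsub : insert x ((insert a (G.neighborFinset a)).erase u) ⊆ G.neighborFinset u := by
      intro z hz
      rcases Finset.mem_insert.mp hz with rfl | hz
      · exact (mem_neighborFinset G u z).mpr hxu.symm
      · obtain ⟨hzu, hzA⟩ := Finset.mem_erase.mp hz
        exact (mem_neighborFinset G u z).mpr
          (hclique a h3a ((memAiff a u).mp huA) ((memAiff a z).mp hzA) (Ne.symm hzu))
    have hc1 : ((insert a (G.neighborFinset a)).erase u).card = 3 := by
      rw [Finset.card_erase_of_mem huA, hAcard a h3a]
    have hc2 : (insert x ((insert a (G.neighborFinset a)).erase u)).card = 4 := by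
      rw [Finset.card_insert_of_notMem (fun h => hxA (Finset.mem_of_mem_erase h)), hc1]
    refine (Finset.eq_of_subset_of_card_le hsub ?_).symm
    rw [hc2, card_neighborFinset_eq_degree, hu4]
  -- Part 1
  have part1 : ∀ a : V, G.degree a = 3 →
      (G.neighborSet x ∩ insert a (G.neighborSet a)).ncard ≤ 1 := by
    intro a h3a
    by_contra hlt
    push_neg at hlt
    obtain ⟨u, v, hu, hv, huv⟩ := (Set.one_lt_ncard_iff (Set.toFinite _)).mp hlt
    obtain ⟨hxu, huA⟩ := hu
    obtain ⟨hxv, hvA⟩ := hv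
    rw [mem_neighborSet] at hxu hxv
    -- u, v are neighbors of a
    have hnotself : ∀ z : V, G.Adj x z → z ∈ (insert a (G.neighborSet a) : Set V) → G.Adj a z := by
      intro z hxz hzA
      rcases Set.mem_insert_iff.mp hzA with rfl | hz
      · exact absurd (Set.mem_insert_of_mem z ((mem_neighborSet G z x).mpr hxz.symm))
          (hx z h3a)
      · exact (mem_neighborSet G a z).mp hz
    have hau : G.Adj a u := hnotself u hxu huA
    have hav : G.Adj a v := hnotself v hxv hvA
    -- third neighbor w
    have hcw : (((G.neighborFinset a).erase u).erase v).card = 1 := by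
      rw [Finset.card_erase_of_mem (Finset.mem_erase.mpr ⟨(huv.symm),
        (mem_neighborFinset G a v).mpr hav⟩),
        Finset.card_erase_of_mem ((mem_neighborFinset G a u).mpr hau),
        card_neighborFinset_eq_degree, h3a]
    obtain ⟨w, hw⟩ := Finset.card_eq_one.mp hcw
    have hwmem : w ∈ (G.neighborFinset a).erase u := Finset.erase_subset _ _ (hw ▸ Finset.mem_singleton_self w)
    have hwu : w ≠ u := (Finset.mem_erase.mp hwmem).1
    have haw : G.Adj a w := (mem_neighborFinset G a w).mp (Finset.mem_of_mem_erase hwmem)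
    have hwv : w ≠ v := by
      have := (Finset.mem_erase.mp (hw ▸ Finset.mem_singleton_self w)).1
      exact this
    have hNa : ∀ z : V, G.Adj a z → z = u ∨ z = v ∨ z = w := by
      intro z haz
      by_cases h1 : z = u
      · exact Or.inl h1
      by_cases h2 : z = v
      · exact Or.inr (Or.inl h2)
      · right; right
        have : z ∈ ((G.neighborFinset a).erase u).erase v :=
          Finset.mem_erase.mpr ⟨h2, Finset.mem_erase.mpr ⟨h1, (mem_neighborFinset G a z).mpr haz⟩⟩
        rw [hw] at this
        exact Finset.mem_singleton.mp this
    -- the separator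
    set S : Finset V := {x, w} with hS
    have hScard : S.card ≤ 2 := Finset.card_insert_le _ _ |>.trans (by simp)
    have hcon := h3.2 S hScard
    -- pick z outside
    have h5 : ({a, u, v, x, w} : Finset V).card ≤ 5 :=
      (Finset.card_insert_le _ _).trans (Nat.succ_le_succ ((Finset.card_insert_le _ _).trans
        (Nat.succ_le_succ ((Finset.card_insert_le _ _).trans (Nat.succ_le_succ
          ((Finset.card_insert_le _ _).trans (Nat.succ_le_succ
            (le_of_eq (Finset.card_singleton _)))))))))
    have hzex : ∃ z : V, z ∉ ({a, u, v, x, w} : Finset V) := by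
      by_contra hno
      push_neg at hno
      have : Finset.univ ⊆ ({a, u, v, x, w} : Finset V) := fun z _ => hno z
      have := (Finset.card_le_card this).trans h5
      rw [Finset.card_univ, hcard] at this
      omega
    obtain ⟨z, hz⟩ := hzex
    simp only [Finset.mem_insert, Finset.mem_singleton, not_or] at hz
    obtain ⟨hza, hzu, hzv, hzx, hzw⟩ := hz
    have hxS : x ∈ S := Finset.mem_insert_self x {w}
    have hwS : w ∈ S := Finset.mem_insert_of_mem (Finset.mem_singleton_self w)
    have ha' : a ∈ ((↑S : Set V)ᶜ : Set V) := by
      simp only [hS, Set.mem_compl_iff, Finset.coe_insert, Finset.coe_singleton,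
        Set.mem_insert_iff, Set.mem_singleton_iff, not_or]
      exact ⟨fun h => hx a h3a (h ▸ Set.mem_insert a _), fun h => G.irrefl (h ▸ haw)⟩
    have hz' : z ∈ ((↑S : Set V)ᶜ : Set V) := by
      simp only [hS, Set.mem_compl_iff, Finset.coe_insert, Finset.coe_singleton,
        Set.mem_insert_iff, Set.mem_singleton_iff, not_or]
      exact ⟨hzx, hzw⟩
    -- adjacency closure of {a, u, v} outside the separator
    have step : ∀ p q : V, (p = a ∨ p = u ∨ p = v) → q ∉ S → G.Adj p q →
        (q = a ∨ q = u ∨ q = v) := by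
      intro p q hp hqS hpq
      have hqx : q ≠ x := fun h => hqS (h ▸ hxS)
      have hqw : q ≠ w := fun h => hqS (h ▸ hwS)
      rcases hp with h | h | h
      · rw [h] at hpq
        rcases hNa q hpq with h3 | h3 | h3
        · exact Or.inr (Or.inl h3)
        · exact Or.inr (Or.inr h3)
        · exact absurd h3 hqw
      · rw [h] at hpq
        have hq : q ∈ G.neighborFinset u := (mem_neighborFinset G u q).mpr hpq
        rw [key a u h3a hau hxu] at hq
        rcases Finset.mem_insert.mp hq with h' | h'
        · exact absurd h' hqx
        · obtain ⟨hqu, hqA⟩ := Finset.mem_erase.mp h'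
          rcases Finset.mem_insert.mp hqA with h2 | h2
          · exact Or.inl h2
          · rcases hNa q ((mem_neighborFinset G a q).mp h2) with h3 | h3 | h3
            · exact absurd h3 hqu
            · exact Or.inr (Or.inr h3)
            · exact absurd h3 hqw
      · rw [h] at hpq
        have hq : q ∈ G.neighborFinset v := (mem_neighborFinset G v q).mpr hpq
        rw [key a v h3a hav hxv] at hq
        rcases Finset.mem_insert.mp hq with h' | h'
        · exact absurd h' hqx
        · obtain ⟨hqv, hqA⟩ := Finset.mem_erase.mp h'
          rcases Finset.mem_insert.mp hqA with h2 | h2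
          · exact Or.inl h2
          · rcases hNa q ((mem_neighborFinset G a q).mp h2) with h3 | h3 | h3
            · exact Or.inr (Or.inl h3)
            · exact absurd h3 hqv
            · exact absurd h3 hqw
    have hreach := hcon.preconnected ⟨a, ha'⟩ ⟨z, hz'⟩
    obtain ⟨p⟩ := hreach
    have hwalk : ∀ (s t : ((↑S : Set V)ᶜ : Set V)) (_ : (G.induce ((↑S : Set V)ᶜ)).Walk s t),
        ((s : V) = a ∨ (s : V) = u ∨ (s : V) = v) →
        ((t : V) = a ∨ (t : V) = u ∨ (t : V) = v) := by
      intro s t p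
      induction p with
      | nil => exact id
      | cons h p ih =>
        intro hsmem
        apply ih
        rename_i s' t' _
        have hadj : G.Adj (s' : V) (t' : V) := h
        exact step _ _ hsmem (fun hmem => t'.2 hmem) hadj
    have hfin : z = a ∨ z = u ∨ z = v := hwalk _ _ p (Or.inl rfl)
    rcases hfin with h | h | h
    · exact hza h
    · exact hzu h
    · exact hzv h
  refine ⟨part1, ?_⟩
  -- Part 2: every vertex other than x lies in some closed neighborhood A_a
  have cover : ∀ u : V, u ≠ x → ∃ a : V, G.degree a = 3 ∧
      u ∈ (insert a (G.neighborSet a) : Set V) := by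
    intro u hux
    set D := Finset.univ.filter (fun v => G.degree v = 3) with hD
    set B := D.biUnion (fun a => insert a (G.neighborFinset a)) with hB
    have hdisjF : ∀ a ∈ D, ∀ b ∈ D, a ≠ b →
        Disjoint (insert a (G.neighborFinset a)) (insert b (G.neighborFinset b)) := by
      intro a haD b hbD hab
      have h3a := (Finset.mem_filter.mp haD).2
      have h3b := (Finset.mem_filter.mp hbD).2
      have := hdisj a b h3a h3b hab
      rw [Finset.disjoint_left]
      intro c hca hcb
      exact Set.disjoint_left.mp this ((memAiff a c).mp hca) ((memAiff b c).mp hcb)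
    have hBcard : B.card = 8 * k := by
      rw [hB, Finset.card_biUnion hdisjF]
      have : ∀ a ∈ D, (insert a (G.neighborFinset a)).card = 4 := by
        intro a haD
        exact hAcard a (Finset.mem_filter.mp haD).2
      rw [Finset.sum_congr rfl this, Finset.sum_const, hs]
      ring
    have hxB : x ∉ B := by
      intro hmem
      obtain ⟨a, haD, hmem⟩ := Finset.mem_biUnion.mp hmem
      exact hx a (Finset.mem_filter.mp haD).2 ((memAiff a x).mp hmem)
    have huniv : insert x B = Finset.univ := by
      apply Finset.eq_univ_of_card
      rw [Finset.card_insert_of_notMem hxB, hBcard, hcard]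
    have : u ∈ insert x B := huniv ▸ Finset.mem_univ u
    rcases Finset.mem_insert.mp this with rfl | hmem
    · exact absurd rfl hux
    · obtain ⟨a, haD, hmem⟩ := Finset.mem_biUnion.mp hmem
      exact ⟨a, (Finset.mem_filter.mp haD).2, (memAiff a u).mp hmem⟩
  intro u hu v hv hadj
  rw [mem_neighborSet] at hu hv
  have hux : u ≠ x := fun h => G.irrefl (h ▸ hu)
  have hvx : v ≠ x := fun h => G.irrefl (h ▸ hv)
  obtain ⟨a, h3a, huA⟩ := cover u hux
  obtain ⟨b, h3b, hvA⟩ := cover v hvx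
  have hnotself : ∀ c z : V, G.degree c = 3 → G.Adj x z →
      z ∈ (insert c (G.neighborSet c) : Set V) → G.Adj c z := by
    intro c z h3c hxz hzA
    rcases Set.mem_insert_iff.mp hzA with rfl | hz
    · exact absurd (Set.mem_insert_of_mem z ((mem_neighborSet G z x).mpr hxz.symm))
        (hx z h3c)
    · exact (mem_neighborSet G c z).mp hz
  have hau : G.Adj a u := hnotself a u h3a hu huA
  by_cases hab : a = b
  · subst hab
    have h1 := part1 a h3a
    have h2 : 1 < (G.neighborSet x ∩ insert a (G.neighborSet a)).ncard := by
      rw [Set.one_lt_ncard_iff (Set.toFinite _)]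
      exact ⟨u, v, ⟨hu, huA⟩, ⟨hv, hvA⟩, G.ne_of_adj hadj⟩
    omega
  · -- different cliques: impossible since N(u) ⊆ A_a ∪ {x}
    have hNu := key a u h3a hau hu
    have hvmem : v ∈ G.neighborFinset u := (mem_neighborFinset G u v).mpr hadj
    rw [hNu] at hvmem
    rcases Finset.mem_insert.mp hvmem with rfl | hvmem
    · exact hvx rfl
    · have hvA' : v ∈ (insert a (G.neighborSet a) : Set V) :=
        (memAiff a v).mp (Finset.mem_of_mem_erase hvmem)
      exact Set.disjoint_left.mp (hdisj a b h3a h3b hab) hvA' hvA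
end
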